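/- arXiv:2204.07785 — 4 statements merged into one kernel-verified Lean document; each statement's English description precedes it below -/
import Mathlib

section
/- For every integer m ≥ 2 there exists δ > 0 such that for all real v with |v| < δ, the series ∑_{n ≥ 1} t(m, {1}^{n−1}) v^{n−1} converges absolutely and equals the generalized hypergeometric function _{m+1}F_m with upper parameters (1+v)/2, 1, and 1/2 repeated m−1 times, lower parameters 3/2 repeated m times, evaluated at 1. -/
open scoped BigOperators

/-- The multiple `t`-value of an index `K = (k₁, …, kₙ)` (a list of positive integers):
`t(K) = ∑_{m₁ > ⋯ > mₙ > 0, all mᵢ odd} 1 / (m₁^{k₁} ⋯ mₙ^{kₙ})`. -/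
noncomputable def multT (K : List ℕ) : ℝ :=
  ∑' m : Fin K.length → ℕ,
    if (∀ i, Odd (m i)) ∧ (∀ i j : Fin K.length, i < j → m j < m i) then
      ∏ i, ((m i : ℝ) ^ K.get i)⁻¹
    else 0

/-- The multiple `t`-star value of an index `K = (k₁, …, kₙ)`:
`t*(K) = ∑_{m₁ ≥ ⋯ ≥ mₙ > 0, all mᵢ odd} 1 / (m₁^{k₁} ⋯ mₙ^{kₙ})`. -/
noncomputable def multTStar (K : List ℕ) : ℝ :=
  ∑' m : Fin K.length → ℕ,
    if (∀ i, Odd (m i)) ∧ (∀ i j : Fin K.length, i < j → m j ≤ m i) then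
      ∏ i, ((m i : ℝ) ^ K.get i)⁻¹
    else 0

/-- An index (list of positive integers) is admissible if its first entry is `> 1`. -/
def Admissible (K : List ℕ) : Prop := (∀ i ∈ K, 1 ≤ i) ∧ 2 ≤ K.headI

instance : DecidablePred Admissible := fun K =>
  inferInstanceAs (Decidable ((∀ i ∈ K, 1 ≤ i) ∧ 2 ≤ K.headI))

/-- `G0h k n s` is the sum of multiple `t`-values over all admissible indices of
weight `k`, depth `n` and height `s`. -/
noncomputable def G0h (k n s : ℕ) : ℝ :=
  ∑' K : List ℕ,
    if Admissible K ∧ K.sum = k ∧ K.length = n ∧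
        K.countP (fun i => decide (2 ≤ i)) = s then
      multT K
    else 0

/-- `G0hStar k n s` is the sum of multiple `t`-star values over all admissible indices of
weight `k`, depth `n` and height `s`. -/
noncomputable def G0hStar (k n s : ℕ) : ℝ :=
  ∑' K : List ℕ,
    if Admissible K ∧ K.sum = k ∧ K.length = n ∧
        K.countP (fun i => decide (2 ≤ i)) = s then
      multTStar K
    else 0

/-- `G0d k n` is the sum of multiple `t`-values over all admissible indices of
weight `k` and depth `n`. -/
noncomputable def G0d (k n : ℕ) : ℝ :=
  ∑' K : List ℕ,
    if Admissible K ∧ K.sum = k ∧ K.length = n then multT K else 0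

/-- `G0dStar k n` is the sum of multiple `t`-star values over all admissible indices of
weight `k` and depth `n`. -/
noncomputable def G0dStar (k n : ℕ) : ℝ :=
  ∑' K : List ℕ,
    if Admissible K ∧ K.sum = k ∧ K.length = n then multTStar K else 0

/-- The single `t`-value `t(n) = ∑_{m odd, m > 0} 1 / m^n`. -/
noncomputable def tval (n : ℕ) : ℝ := ∑' m : ℕ, 1 / (2 * (m : ℝ) + 1) ^ n

/-- The ascending Pochhammer symbol `(a)ₙ = a (a+1) ⋯ (a+n-1)`. -/
noncomputable def poch (a : ℂ) (n : ℕ) : ℂ := ∏ i ∈ Finset.range n, (a + i)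

/-- The generalized hypergeometric function `₃F₂(a, b, c; d, e; z)`. -/
noncomputable def hyp3F2 (a b c d e z : ℂ) : ℂ :=
  ∑' n : ℕ, poch a n * poch b n * poch c n /
      ((n.factorial : ℂ) * poch d n * poch e n) * z ^ n

/-- The generalized hypergeometric function with upper parameters `as` and lower
parameters `bs`. -/
noncomputable def hypF (as bs : List ℂ) (z : ℂ) : ℂ :=
  ∑' n : ℕ, (as.map fun a => poch a n).prod /
      ((n.factorial : ℂ) * (bs.map fun b => poch b n).prod) * z ^ n

/-- The one-variable multiple polylogarithm
`L_K(z) = ∑_{m₁ > ⋯ > mₙ > 0, all mᵢ odd} z^{m₁} / (m₁^{k₁} ⋯ mₙ^{kₙ})`. -/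
noncomputable def Lt (K : List ℕ) (z : ℝ) : ℝ :=
  ∑' m : Fin K.length → ℕ,
    if h : (∀ i, Odd (m i)) ∧ (∀ i j : Fin K.length, i < j → m j < m i) ∧
        0 < K.length then
      z ^ (m ⟨0, h.2.2⟩) * ∏ i, ((m i : ℝ) ^ K.get i)⁻¹
    else 0

/-- The one-variable star multiple polylogarithm
`L*_K(z) = ∑_{m₁ ≥ ⋯ ≥ mₙ > 0, all mᵢ odd} z^{m₁} / (m₁^{k₁} ⋯ mₙ^{kₙ})`. -/
noncomputable def LtStar (K : List ℕ) (z : ℝ) : ℝ :=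
  ∑' m : Fin K.length → ℕ,
    if h : (∀ i, Odd (m i)) ∧ (∀ i j : Fin K.length, i < j → m j ≤ m i) ∧
        0 < K.length then
      z ^ (m ⟨0, h.2.2⟩) * ∏ i, ((m i : ℝ) ^ K.get i)⁻¹
    else 0

/-- `G0hz k n s z` is the sum of `L_K(z)` over all admissible indices `K` of
weight `k`, depth `n` and height `s`. -/
noncomputable def G0hz (k n s : ℕ) (z : ℝ) : ℝ :=
  ∑' K : List ℕ,
    if Admissible K ∧ K.sum = k ∧ K.length = n ∧
        K.countP (fun i => decide (2 ≤ i)) = s then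
      Lt K z
    else 0

/-- `G0hzStar k n s z` is the sum of `L*_K(z)` over all admissible indices `K` of
weight `k`, depth `n` and height `s`. -/
noncomputable def G0hzStar (k n s : ℕ) (z : ℝ) : ℝ :=
  ∑' K : List ℕ,
    if Admissible K ∧ K.sum = k ∧ K.length = n ∧
        K.countP (fun i => decide (2 ≤ i)) = s then
      LtStar K z
    else 0


open scoped ENNReal

section mtAux


noncomputable def mtE (n k : ℕ) : ℝ :=
  ∑ t ∈ Finset.powersetCard n (Finset.range k), ∏ j ∈ t, (2 * (j : ℝ) + 1)⁻¹

lemma mtE_nonneg (n k : ℕ) : 0 ≤ mtE n k := by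
  unfold mtE; positivity

lemma mtE_eq_zero {n k : ℕ} (h : k < n) : mtE n k = 0 := by
  unfold mtE
  rw [Finset.powersetCard_eq_empty.2 (by simpa using h), Finset.sum_empty]

lemma mtE_gen (x : ℝ) (k : ℕ) :
    ∑ n ∈ Finset.range (k + 1), mtE n k * x ^ n
      = ∏ j ∈ Finset.range k, (1 + x * (2 * (j : ℝ) + 1)⁻¹) := by
  have h := Finset.prod_add (fun j : ℕ => x * (2 * (j : ℝ) + 1)⁻¹) (fun _ : ℕ => (1 : ℝ))
      (Finset.range k)
  have h2 : ∏ j ∈ Finset.range k, (1 + x * (2 * (j : ℝ) + 1)⁻¹)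
      = ∑ t ∈ (Finset.range k).powerset, ∏ j ∈ t, (x * (2 * (j : ℝ) + 1)⁻¹) := by
    calc ∏ j ∈ Finset.range k, (1 + x * (2 * (j : ℝ) + 1)⁻¹)
        = ∏ j ∈ Finset.range k, (x * (2 * (j : ℝ) + 1)⁻¹ + 1) := by
          exact Finset.prod_congr rfl fun j _ => by ring
      _ = ∑ t ∈ (Finset.range k).powerset, ∏ j ∈ t, (x * (2 * (j : ℝ) + 1)⁻¹) := by
          rw [h]; simp
  rw [h2, Finset.sum_powerset, Finset.card_range]
  refine Finset.sum_congr rfl fun n _ => ?_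
  rw [mtE, Finset.sum_mul]
  refine Finset.sum_congr rfl fun t ht => ?_
  obtain ⟨hsub, hcard⟩ := Finset.mem_powersetCard.1 ht
  rw [Finset.prod_mul_distrib, Finset.prod_const, hcard]
  ring

lemma mtE_tsum (x : ℝ) (k : ℕ) :
    ∑' n : ℕ, mtE n k * x ^ n
      = ∏ j ∈ Finset.range k, (1 + x * (2 * (j : ℝ) + 1)⁻¹) := by
  rw [tsum_eq_sum (s := Finset.range (k + 1)) (fun n hn => by
    rw [mtE_eq_zero (by simpa using hn), zero_mul])]
  exact mtE_gen x k

lemma mt_telescope (k : ℕ) :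
    ∏ j ∈ Finset.range k, ((2 * (j : ℝ) + 3) / (2 * j + 1)) = 2 * k + 1 := by
  induction k with
  | zero => simp
  | succ k ih =>
    rw [Finset.prod_range_succ, ih]
    have h : (2 * (k : ℝ) + 1) ≠ 0 := by positivity
    field_simp
    push_cast
    ring

lemma mt_prod_bound {x : ℝ} (hx0 : 0 ≤ x) (hx : x ≤ 1 / 2) (k : ℕ) :
    ∏ j ∈ Finset.range k, (1 + x * (2 * (j : ℝ) + 1)⁻¹) ≤ Real.sqrt (2 * k + 1) := by
  have hnn : (0 : ℝ) ≤ ∏ j ∈ Finset.range k, (1 + x * (2 * (j : ℝ) + 1)⁻¹) :=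
    Finset.prod_nonneg fun j _ => by positivity
  rw [Real.le_sqrt hnn (by positivity)]
  calc (∏ j ∈ Finset.range k, (1 + x * (2 * (j : ℝ) + 1)⁻¹)) ^ 2
      = ∏ j ∈ Finset.range k, (1 + x * (2 * (j : ℝ) + 1)⁻¹) ^ 2 := by
        rw [Finset.prod_pow]
    _ ≤ ∏ j ∈ Finset.range k, ((2 * (j : ℝ) + 3) / (2 * j + 1)) := by
        refine Finset.prod_le_prod (fun j _ => by positivity) (fun j _ => ?_)
        have hj : (0:ℝ) < 2 * (j:ℝ) + 1 := by positivity
        rw [div_eq_mul_inv, show (2 * (j : ℝ) + 3) = (2*(j:ℝ)+1) + 2 from by ring]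
        have hinv : (2 * (j:ℝ) + 1)⁻¹ ≤ 1 := by
          rw [inv_le_one_iff₀]; right; nlinarith
        have h0 : (0:ℝ) ≤ (2 * (j:ℝ) + 1)⁻¹ := by positivity
        have key : (1 + x * (2 * (j : ℝ) + 1)⁻¹) ^ 2 ≤ 1 + 2 * (2 * (j:ℝ) + 1)⁻¹ := by
          have hw2 : ((2 * (j:ℝ) + 1)⁻¹) ^ 2 ≤ (2 * (j:ℝ) + 1)⁻¹ := by nlinarith
          have hxx : x ^ 2 ≤ 1 / 4 := by nlinarith
          have hcross : x ^ 2 * ((2 * (j:ℝ) + 1)⁻¹) ^ 2 ≤ (1/4) * (2 * (j:ℝ) + 1)⁻¹ :=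
            mul_le_mul hxx hw2 (sq_nonneg _) (by norm_num)
          nlinarith [mul_le_mul_of_nonneg_right (show 2 * x ≤ 1 by linarith) h0]
        calc (1 + x * (2 * (j : ℝ) + 1)⁻¹) ^ 2 ≤ 1 + 2 * (2 * (j:ℝ) + 1)⁻¹ := key
          _ = ((2*(j:ℝ)+1) + 2) * (2 * (j:ℝ)+1)⁻¹ := by
              field_simp
    _ = 2 * k + 1 := mt_telescope k

lemma mtE_le (n k : ℕ) : mtE n k ≤ 2 ^ n * Real.sqrt (2 * k + 1) := by
  rcases le_or_gt n k with h | h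
  · have h1 : mtE n k * (1/2:ℝ) ^ n ≤ ∑ n' ∈ Finset.range (k+1), mtE n' k * (1/2:ℝ) ^ n' := by
      refine Finset.single_le_sum (f := fun n' => mtE n' k * (1/2:ℝ) ^ n') ?_ ?_
      · intro i _; have := mtE_nonneg i k; positivity
      · simpa using Nat.lt_succ_of_le h
    have h2 := (mtE_gen (1/2) k).symm ▸ h1
    have h3 : mtE n k * (1/2:ℝ) ^ n ≤ Real.sqrt (2 * k + 1) := by
      calc mtE n k * (1/2:ℝ) ^ n ≤ ∏ j ∈ Finset.range k, (1 + (1/2:ℝ) * (2 * (j : ℝ) + 1)⁻¹) := by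
            rw [← mtE_gen]; exact h1
        _ ≤ Real.sqrt (2 * k + 1) := mt_prod_bound (by norm_num) le_rfl k
    have hp : (0:ℝ) < (1/2:ℝ)^n := by positivity
    calc mtE n k = (mtE n k * (1/2:ℝ)^n) * 2^n := by
          rw [mul_assoc]; norm_num [← mul_pow]
      _ ≤ Real.sqrt (2*k+1) * 2^n := by
          exact mul_le_mul_of_nonneg_right h3 (by positivity)
      _ = 2^n * Real.sqrt (2*k+1) := by ring
  · rw [mtE_eq_zero h]; positivity

lemma mt_summable_bound (m : ℕ) (hm : 2 ≤ m) :
    Summable (fun k : ℕ => ((2 * (k:ℝ) + 1) ^ m)⁻¹ * Real.sqrt (2 * k + 1)) := by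
  have htail : Summable (fun k : ℕ => 2 * (((k:ℝ) + 1) ^ (3/2 : ℝ))⁻¹) := by
    refine Summable.mul_left 2 ?_
    have h := (Real.summable_one_div_nat_rpow.mpr (by norm_num : (1:ℝ) < 3/2)).comp_injective
      (add_left_injective 1)
    refine h.congr fun k => ?_
    simp only [Function.comp_apply]
    push_cast
    rw [one_div]
  refine Summable.of_nonneg_of_le (fun k => by positivity) (fun k => ?_) htail
  have hk1 : (1:ℝ) ≤ 2 * (k:ℝ) + 1 := by have := Nat.cast_nonneg (α:=ℝ) k; linarith
  have hpos : (0:ℝ) < 2 * (k:ℝ) + 1 := by positivity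
  have hpow : (2 * (k:ℝ) + 1) ^ 2 ≤ (2 * (k:ℝ) + 1) ^ m := pow_le_pow_right₀ hk1 hm
  have h1 : ((2 * (k:ℝ) + 1) ^ m)⁻¹ ≤ ((2 * (k:ℝ) + 1) ^ 2)⁻¹ :=
    inv_anti₀ (by positivity) hpow
  have hsq : Real.sqrt (2 * (k:ℝ) + 1) ≤ 2 * Real.sqrt ((k:ℝ) + 1) := by
    rw [show (2:ℝ) * Real.sqrt ((k:ℝ)+1) = Real.sqrt 4 * Real.sqrt ((k:ℝ)+1) from by
      rw [show (4:ℝ) = 2^2 by norm_num, Real.sqrt_sq (by norm_num)]]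
    rw [← Real.sqrt_mul (by norm_num)]
    exact Real.sqrt_le_sqrt (by nlinarith)
  have h2 : ((2 * (k:ℝ) + 1) ^ 2)⁻¹ ≤ (((k:ℝ) + 1) ^ 2)⁻¹ :=
    inv_anti₀ (by positivity) (by nlinarith)
  calc ((2 * (k:ℝ) + 1) ^ m)⁻¹ * Real.sqrt (2 * k + 1)
      ≤ (((k:ℝ) + 1) ^ 2)⁻¹ * (2 * Real.sqrt ((k:ℝ) + 1)) := by
        exact mul_le_mul (le_trans h1 h2) hsq (Real.sqrt_nonneg _) (by positivity)
    _ = 2 * (((k:ℝ) + 1) ^ (3/2 : ℝ))⁻¹ := by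
        have hp : (0:ℝ) < (k:ℝ) + 1 := by positivity
        rw [Real.sqrt_eq_rpow]
        rw [show (((k:ℝ) + 1) ^ 2) = ((k:ℝ)+1) ^ (2:ℝ) from by
          rw [← Real.rpow_natCast ((k:ℝ)+1) 2]; norm_num]
        rw [← Real.rpow_neg hp.le, ← Real.rpow_neg hp.le]
        rw [show ((k:ℝ)+1) ^ (-(2:ℝ)) * (2 * ((k:ℝ)+1) ^ (1/2:ℝ)) =
          2 * (((k:ℝ)+1) ^ (-(2:ℝ)) * ((k:ℝ)+1) ^ (1/2:ℝ)) from by ring]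
        rw [← Real.rpow_add hp]
        norm_num

lemma mt_strictAnti_eq {n : ℕ} {c d : Fin n → ℕ}
    (hc : ∀ i j : Fin n, i < j → c j < c i) (hd : ∀ i j : Fin n, i < j → d j < d i)
    (h : Finset.image c Finset.univ = Finset.image d Finset.univ) : c = d := by
  have hcm : StrictMono (fun i : Fin n => c i.rev) := fun i j hij =>
    hc j.rev i.rev (Fin.rev_lt_rev.mpr hij)
  have hdm : StrictMono (fun i : Fin n => d i.rev) := fun i j hij =>
    hd j.rev i.rev (Fin.rev_lt_rev.mpr hij)
  have hcinj : Function.Injective c := by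
    intro a b hab
    by_contra hne
    rcases lt_or_gt_of_ne hne with hl | hl
    · exact (hc a b hl).ne' hab
    · exact (hc b a hl).ne hab
  have hcard : (Finset.image c Finset.univ).card = n := by
    rw [Finset.card_image_of_injective _ hcinj, Finset.card_univ, Fintype.card_fin]
  have h1 := Finset.orderEmbOfFin_unique hcard
      (f := fun i : Fin n => c i.rev)
      (fun x => Finset.mem_image_of_mem _ (Finset.mem_univ _)) hcm
  have h2 := Finset.orderEmbOfFin_unique hcard
      (f := fun i : Fin n => d i.rev)
      (fun x => by rw [h]; exact Finset.mem_image_of_mem _ (Finset.mem_univ _)) hdm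
  funext i
  have h3 := congrFun (h1.trans h2.symm) i.rev
  simpa [Fin.rev_rev] using h3

lemma mt_anti_inj {n : ℕ} {c : Fin n → ℕ}
    (hc : ∀ i j : Fin n, i < j → c j < c i) : Function.Injective c := by
  intro a b hab
  by_contra hne
  rcases lt_or_gt_of_ne hne with hl | hl
  · exact (hc a b hl).ne' hab
  · exact (hc b a hl).ne hab

lemma mtD (n k : ℕ) :
    (∑' c : Fin n → ℕ,
        if (∀ i j : Fin n, i < j → c j < c i) ∧ (∀ i, c i < k) then
          ∏ i, ((2 * c i + 1 : ℕ) : ℝ≥0∞)⁻¹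
        else 0)
      = ∑ t ∈ Finset.powersetCard n (Finset.range k),
          ∏ j ∈ t, ((2 * j + 1 : ℕ) : ℝ≥0∞)⁻¹ := by
  set g : (Fin n → ℕ) → ℝ≥0∞ := fun c =>
    if (∀ i j : Fin n, i < j → c j < c i) ∧ (∀ i, c i < k) then
      ∏ i, ((2 * c i + 1 : ℕ) : ℝ≥0∞)⁻¹ else 0 with hg
  set f : Finset ℕ → ℝ≥0∞ := fun t =>
    if t ∈ Finset.powersetCard n (Finset.range k) then
      ∏ j ∈ t, ((2 * j + 1 : ℕ) : ℝ≥0∞)⁻¹ else 0 with hf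
  have hprodne : ∀ c : Fin n → ℕ, (∏ i, ((2 * c i + 1 : ℕ) : ℝ≥0∞)⁻¹) ≠ 0 := by
    intro c
    rw [Finset.prod_ne_zero_iff]
    intro i _
    exact ENNReal.inv_ne_zero.2 (ENNReal.natCast_ne_top _)
  have hcond : ∀ c : Fin n → ℕ, g c ≠ 0 →
      (∀ i j : Fin n, i < j → c j < c i) ∧ (∀ i, c i < k) := by
    intro c hcne
    by_contra hcon
    rw [hg] at hcne
    simp only [if_neg hcon] at hcne
    exact hcne rfl
  have key : (∑' t : Finset ℕ, f t) = ∑' c, g c := by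
    refine tsum_eq_tsum_of_ne_zero_bij
      (fun c => Finset.image c.1 Finset.univ) ?_ ?_ ?_
    · intro x y hxy
      exact Subtype.ext (mt_strictAnti_eq (hcond _ x.2).1 (hcond _ y.2).1 hxy)
    · intro t ht
      have htm : t ∈ Finset.powersetCard n (Finset.range k) := by
        by_contra hcon
        rw [hf] at ht
        simp only [Function.mem_support, if_neg hcon] at ht
        exact ht rfl
      obtain ⟨hsub, hcard⟩ := Finset.mem_powersetCard.1 htm
      set c0 : Fin n → ℕ := fun i => t.orderEmbOfFin hcard i.rev with hc0
      have hanti : ∀ i j : Fin n, i < j → c0 j < c0 i := fun i j hij =>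
        (t.orderEmbOfFin hcard).strictMono (Fin.rev_lt_rev.mpr hij)
      have hlt : ∀ i, c0 i < k := fun i =>
        Finset.mem_range.1 (hsub (Finset.orderEmbOfFin_mem t hcard i.rev))
      have hmem : c0 ∈ Function.support g := by
        rw [Function.mem_support, hg]
        simp only [if_pos (⟨hanti, hlt⟩ : _ ∧ _)]
        exact hprodne c0
      refine ⟨⟨c0, hmem⟩, ?_⟩
      show Finset.image c0 Finset.univ = t
      have himg : Finset.image c0 Finset.univ
          = Finset.image (⇑(t.orderEmbOfFin hcard)) Finset.univ := by
        ext x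
        simp only [Finset.mem_image, Finset.mem_univ, true_and, hc0]
        constructor
        · rintro ⟨i, hi⟩; exact ⟨i.rev, hi⟩
        · rintro ⟨i, hi⟩; exact ⟨i.rev, by simpa [Fin.rev_rev] using hi⟩
      rw [himg]
      apply Finset.coe_injective
      rw [Finset.coe_image, Finset.coe_univ, Set.image_univ, Finset.range_orderEmbOfFin]
    · intro x
      obtain ⟨hanti, hlt⟩ := hcond _ x.2
      have hinj := mt_anti_inj hanti
      have hcard : (Finset.image x.1 Finset.univ).card = n := by
        rw [Finset.card_image_of_injective _ hinj, Finset.card_univ, Fintype.card_fin]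
      have hsub : Finset.image x.1 Finset.univ ⊆ Finset.range k := by
        intro y hy
        obtain ⟨i, _, rfl⟩ := Finset.mem_image.1 hy
        exact Finset.mem_range.2 (hlt i)
      have hmemP : Finset.image x.1 Finset.univ ∈ Finset.powersetCard n (Finset.range k) :=
        Finset.mem_powersetCard.2 ⟨hsub, hcard⟩
      simp only [hf, hg, if_pos hmemP, if_pos (⟨hanti, hlt⟩ : _ ∧ _)]
      exact Finset.prod_image fun a _ b _ hab => hinj hab
  rw [← key]
  calc ∑' t : Finset ℕ, f t
      = ∑ t ∈ Finset.powersetCard n (Finset.range k), f t :=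
        tsum_eq_sum (fun t ht => by simp only [hf, if_neg ht])
    _ = _ := Finset.sum_congr rfl fun t ht => by simp only [hf, if_pos ht]

noncomputable def mtPhi (m n : ℕ) (g : Fin (n + 1) → ℕ) : ℝ≥0∞ :=
  if (∀ i, Odd (g i)) ∧ (∀ i j : Fin (n + 1), i < j → g j < g i) then
    ((g 0 : ℝ≥0∞) ^ m)⁻¹ * ∏ i : Fin n, ((g i.succ : ℝ≥0∞))⁻¹
  else 0

noncomputable def mtPsi (n : ℕ) (a : ℕ) (b : Fin n → ℕ) : ℝ≥0∞ :=
  if (∀ i, Odd (b i)) ∧ (∀ i j : Fin n, i < j → b j < b i) ∧ (∀ i, b i < a) then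
    ∏ i : Fin n, ((b i : ℝ≥0∞))⁻¹
  else 0

lemma mt_cond_cons {n : ℕ} (a : ℕ) (b : Fin n → ℕ) :
    ((∀ i, Odd (Fin.cons (α := fun _ => ℕ) a b i)) ∧
        (∀ i j : Fin (n + 1), i < j →
          Fin.cons (α := fun _ => ℕ) a b j < Fin.cons (α := fun _ => ℕ) a b i))
      ↔ (Odd a ∧ ((∀ i, Odd (b i)) ∧ (∀ i j : Fin n, i < j → b j < b i) ∧
          (∀ i, b i < a))) := by
  constructor
  · rintro ⟨h1, h2⟩
    refine ⟨by simpa using h1 0, fun i => by simpa using h1 i.succ, fun i j hij => ?_, fun i => ?_⟩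
    · have := h2 i.succ j.succ (by simpa [Fin.succ_lt_succ_iff] using hij)
      simpa using this
    · have := h2 0 i.succ (Fin.succ_pos i)
      simpa using this
  · rintro ⟨ha, hb, hanti, hlt⟩
    refine ⟨fun i => ?_, fun i j => ?_⟩
    · refine Fin.cases ?_ ?_ i
      · simpa using ha
      · intro i'; simpa using hb i'
    · refine Fin.cases (motive := fun jj => i < jj →
          Fin.cons (α := fun _ => ℕ) a b jj < Fin.cons (α := fun _ => ℕ) a b i) ?_ ?_ j
      · intro h0; exact absurd h0 (by simp)
      · intro j' hij
        refine Fin.cases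
          (motive := fun ii => ii < j'.succ →
            Fin.cons (α := fun _ => ℕ) a b j'.succ < Fin.cons (α := fun _ => ℕ) a b ii)
          ?_ ?_ i hij
        · intro _; simpa using hlt j'
        · intro i' hij'
          simpa using hanti i' j' (by simpa [Fin.succ_lt_succ_iff] using hij')

lemma mtPhi_cons (m n : ℕ) (a : ℕ) (b : Fin n → ℕ) :
    mtPhi m n (Fin.cons a b) =
      (if Odd a then ((a : ℝ≥0∞) ^ m)⁻¹ else 0) * mtPsi n a b := by
  unfold mtPhi mtPsi
  rw [if_congr (mt_cond_cons a b) rfl rfl]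
  simp only [Fin.cons_zero, Fin.cons_succ]
  by_cases h1 : Odd a <;>
    by_cases h2 : (∀ i, Odd (b i)) ∧ (∀ i j : Fin n, i < j → b j < b i) ∧ (∀ i, b i < a) <;>
    simp [h1, h2]

lemma mtPsi_odd (n k : ℕ) (c : Fin n → ℕ) :
    mtPsi n (2 * k + 1) (fun i => 2 * c i + 1)
      = if (∀ i j : Fin n, i < j → c j < c i) ∧ (∀ i, c i < k) then
          ∏ i, ((2 * c i + 1 : ℕ) : ℝ≥0∞)⁻¹
        else 0 := by
  unfold mtPsi
  refine if_congr ?_ rfl rfl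
  constructor
  · rintro ⟨_, h2, h3⟩
    refine ⟨fun i j hij => ?_, fun i => ?_⟩
    · have h : 2 * c j + 1 < 2 * c i + 1 := h2 i j hij
      omega
    · have h : 2 * c i + 1 < 2 * k + 1 := h3 i
      omega
  · rintro ⟨h2, h3⟩
    refine ⟨fun i => ⟨c i, rfl⟩, fun i j hij => ?_, fun i => ?_⟩
    · show 2 * c j + 1 < 2 * c i + 1
      exact by have := h2 i j hij; omega
    · show 2 * c i + 1 < 2 * k + 1
      exact by have := h3 i; omega

lemma mtPsi_tsum (n k : ℕ) :
    ∑' b : Fin n → ℕ, mtPsi n (2 * k + 1) b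
      = ∑ t ∈ Finset.powersetCard n (Finset.range k),
          ∏ j ∈ t, ((2 * j + 1 : ℕ) : ℝ≥0∞)⁻¹ := by
  rw [← mtD n k]
  have hinj : Function.Injective (fun c : Fin n → ℕ => fun i => 2 * c i + 1) := by
    intro c d hcd
    funext i
    have h : 2 * c i + 1 = 2 * d i + 1 := congrFun hcd i
    omega
  have hsupp : Function.support (mtPsi n (2 * k + 1)) ⊆
      Set.range (fun c : Fin n → ℕ => fun i => 2 * c i + 1) := by
    intro b hb
    have hodd : ∀ i, Odd (b i) := by
      by_contra hcon
      apply hb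
      unfold mtPsi
      rw [if_neg (fun hc => hcon hc.1)]
    refine ⟨fun i => b i / 2, ?_⟩
    funext i
    have h := hodd i
    rw [Nat.odd_iff] at h
    show 2 * (b i / 2) + 1 = b i
    omega
  rw [← Function.Injective.tsum_eq hinj hsupp]
  exact tsum_congr fun c => mtPsi_odd n k c

lemma mtPhi_tsum (m n : ℕ) :
    ∑' g : Fin (n + 1) → ℕ, mtPhi m n g
      = ∑' k : ℕ, (((2 * k + 1 : ℕ) : ℝ≥0∞) ^ m)⁻¹ *
          ∑ t ∈ Finset.powersetCard n (Finset.range k),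
            ∏ j ∈ t, ((2 * j + 1 : ℕ) : ℝ≥0∞)⁻¹ := by
  rw [← Equiv.tsum_eq (Fin.consEquiv (fun _ : Fin (n + 1) => ℕ)) (mtPhi m n)]
  rw [ENNReal.tsum_prod']
  have h1 : ∀ a : ℕ, ∑' b : Fin n → ℕ,
      mtPhi m n ((Fin.consEquiv (fun _ : Fin (n + 1) => ℕ)) (a, b))
        = (if Odd a then ((a : ℝ≥0∞) ^ m)⁻¹ else 0) * ∑' b : Fin n → ℕ, mtPsi n a b := by
    intro a
    rw [← ENNReal.tsum_mul_left]
    exact tsum_congr fun b => by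
      simpa [Fin.consEquiv] using mtPhi_cons m n a b
  calc ∑' (a : ℕ) (b : Fin n → ℕ),
        mtPhi m n ((Fin.consEquiv (fun _ : Fin (n + 1) => ℕ)) (a, b))
      = ∑' a : ℕ, (if Odd a then ((a : ℝ≥0∞) ^ m)⁻¹ else 0) * ∑' b : Fin n → ℕ, mtPsi n a b :=
        tsum_congr h1
    _ = ∑' k : ℕ, (if Odd (2 * k + 1) then (((2 * k + 1 : ℕ) : ℝ≥0∞) ^ m)⁻¹ else 0) *
          ∑' b : Fin n → ℕ, mtPsi n (2 * k + 1) b := by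
        refine (Function.Injective.tsum_eq (g := fun k : ℕ => 2 * k + 1)
          (f := fun a : ℕ => (if Odd a then ((a : ℝ≥0∞) ^ m)⁻¹ else 0) *
            ∑' b : Fin n → ℕ, mtPsi n a b)
          (fun x y hxy => by have h : 2 * x + 1 = 2 * y + 1 := hxy; omega) ?_).symm
        intro a ha
        have hodd : Odd a := by
          by_contra hcon
          apply ha
          show (if Odd a then ((a : ℝ≥0∞) ^ m)⁻¹ else 0) * _ = 0
          rw [if_neg hcon, zero_mul]
        rw [Nat.odd_iff] at hodd
        exact ⟨a / 2, by show 2 * (a / 2) + 1 = a; omega⟩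
    _ = _ := by
        refine tsum_congr fun k => ?_
        rw [if_pos (by rw [Nat.odd_iff]; omega), mtPsi_tsum n k]



lemma mt_get (m n : ℕ) (j : Fin (m :: List.replicate n 1).length) :
    (m :: List.replicate n 1).get j = if (j : ℕ) = 0 then m else 1 := by
  rcases j with ⟨jv, hj⟩
  cases jv with
  | zero => rfl
  | succ v =>
    have h : (m :: List.replicate n 1).get ⟨v + 1, hj⟩
        = (List.replicate n 1).get ⟨v, by simpa using hj⟩ := rfl
    rw [h, List.get_eq_getElem, List.getElem_replicate]
    simp

lemma mt_rterm_summable (m n : ℕ) (hm : 2 ≤ m) :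
    Summable (fun k : ℕ => ((2 * (k:ℝ) + 1) ^ m)⁻¹ * mtE n k) := by
  refine Summable.of_nonneg_of_le
    (fun k => mul_nonneg (by positivity) (mtE_nonneg n k)) (fun k => ?_)
    ((mt_summable_bound m hm).mul_right (2 ^ n))
  calc ((2 * (k:ℝ) + 1) ^ m)⁻¹ * mtE n k
      ≤ ((2 * (k:ℝ) + 1) ^ m)⁻¹ * (2 ^ n * Real.sqrt (2 * k + 1)) :=
        mul_le_mul_of_nonneg_left (mtE_le n k) (by positivity)
    _ = ((2 * (k:ℝ) + 1) ^ m)⁻¹ * Real.sqrt (2 * k + 1) * 2 ^ n := by ring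

lemma mt_term_eq (m n k : ℕ) :
    (((2 * k + 1 : ℕ) : ℝ≥0∞) ^ m)⁻¹ *
        ∑ t ∈ Finset.powersetCard n (Finset.range k),
          ∏ j ∈ t, ((2 * j + 1 : ℕ) : ℝ≥0∞)⁻¹
      = ENNReal.ofReal (((2 * (k:ℝ) + 1) ^ m)⁻¹ * mtE n k) := by
  have h1 : (((2 * k + 1 : ℕ) : ℝ≥0∞) ^ m)⁻¹
      = ENNReal.ofReal (((2 * (k:ℝ) + 1) ^ m)⁻¹) := by
    rw [← ENNReal.ofReal_natCast (2 * k + 1), ← ENNReal.ofReal_pow (by positivity),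
      ← ENNReal.ofReal_inv_of_pos (by positivity)]
    norm_num
  have h2 : ∀ j : ℕ, ((2 * j + 1 : ℕ) : ℝ≥0∞)⁻¹
      = ENNReal.ofReal ((2 * (j : ℝ) + 1)⁻¹) := by
    intro j
    rw [← ENNReal.ofReal_natCast (2 * j + 1), ← ENNReal.ofReal_inv_of_pos (by positivity)]
    norm_num
  have h3 : ∑ t ∈ Finset.powersetCard n (Finset.range k),
        ∏ j ∈ t, ((2 * j + 1 : ℕ) : ℝ≥0∞)⁻¹ = ENNReal.ofReal (mtE n k) := by
    rw [mtE, ENNReal.ofReal_sum_of_nonneg (fun t _ => Finset.prod_nonneg fun j _ => by positivity)]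
    refine Finset.sum_congr rfl fun t _ => ?_
    rw [ENNReal.ofReal_prod_of_nonneg (fun j _ => by positivity)]
    exact Finset.prod_congr rfl fun j _ => h2 j
  rw [h1, h3, ← ENNReal.ofReal_mul (by positivity)]

lemma mtS_eq (m n : ℕ) (hm : 2 ≤ m) :
    ∑' g : Fin (n + 1) → ℕ, mtPhi m n g
      = ENNReal.ofReal (∑' k : ℕ, ((2 * (k:ℝ) + 1) ^ m)⁻¹ * mtE n k) := by
  rw [mtPhi_tsum]
  rw [ENNReal.ofReal_tsum_of_nonneg
    (fun k => mul_nonneg (by positivity) (mtE_nonneg n k)) (mt_rterm_summable m n hm)]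
  exact tsum_congr fun k => mt_term_eq m n k

lemma mtS_ne_top (m n : ℕ) (hm : 2 ≤ m) :
    (∑' g : Fin (n + 1) → ℕ, mtPhi m n g) ≠ ⊤ := by
  rw [mtS_eq m n hm]
  exact ENNReal.ofReal_ne_top

lemma mtPhi_ne_top (m n : ℕ) (g : Fin (n + 1) → ℕ) : mtPhi m n g ≠ ⊤ := by
  unfold mtPhi
  split_ifs with h
  · refine ENNReal.mul_ne_top ?_ ?_
    · rw [ENNReal.inv_ne_top]
      refine pow_ne_zero _ ?_
      have h0 := h.1 0
      rw [Nat.odd_iff] at h0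
      exact_mod_cast (by omega : g 0 ≠ 0)
    · exact (ENNReal.prod_lt_top fun i _ => by
        simp [ENNReal.inv_lt_top]
        have h0 := h.1 i.succ
        rw [Nat.odd_iff] at h0
        exact_mod_cast Nat.pos_of_ne_zero (by omega)).ne
  · exact ENNReal.zero_ne_top

lemma multT_eq_toReal (m n : ℕ) :
    multT (m :: List.replicate n 1) = (∑' g : Fin (n + 1) → ℕ, mtPhi m n g).toReal := by
  have hlen : (m :: List.replicate n 1).length = n + 1 := by simp
  rw [ENNReal.tsum_toReal_eq (mtPhi_ne_top m n)]
  unfold multT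
  rw [← Equiv.tsum_eq (Equiv.arrowCongr (finCongr hlen) (Equiv.refl ℕ))
    (fun g : Fin (n + 1) → ℕ => (mtPhi m n g).toReal)]
  refine tsum_congr fun gK => ?_
  set σ : Fin (n + 1) → Fin (m :: List.replicate n 1).length :=
    fun i => (finCongr hlen).symm i with hσ
  have hval : ∀ i : Fin (n + 1), ((σ i : ℕ)) = (i : ℕ) := by
    intro i; simp [hσ, finCongr_symm, finCongr_apply]
  have hE : ∀ i : Fin (n + 1),
      (Equiv.arrowCongr (finCongr hlen) (Equiv.refl ℕ)) gK i = gK (σ i) := by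
    intro i; simp [Equiv.arrowCongr_apply, hσ]
  have hcond : ((∀ i, Odd (gK i)) ∧
      (∀ i j : Fin (m :: List.replicate n 1).length, i < j → gK j < gK i)) ↔
      ((∀ i, Odd (gK (σ i))) ∧
        (∀ i j : Fin (n + 1), i < j → gK (σ j) < gK (σ i))) := by
    constructor
    · rintro ⟨h1, h2⟩
      exact ⟨fun i => h1 _, fun i j hij => h2 _ _ (by
        rw [Fin.lt_def, hval, hval]; exact hij)⟩
    · rintro ⟨h1, h2⟩
      refine ⟨fun i => ?_, fun i j hij => ?_⟩
      · have := h1 (finCongr hlen i)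
        simpa [hσ] using this
      · have := h2 (finCongr hlen i) (finCongr hlen j) (by
          rw [Fin.lt_def]
          simpa [finCongr_apply, Fin.coe_cast] using hij)
        simpa [hσ] using this
  by_cases hc : (∀ i, Odd (gK i)) ∧
      (∀ i j : Fin (m :: List.replicate n 1).length, i < j → gK j < gK i)
  · rw [if_pos hc]
    unfold mtPhi
    have hc' := hcond.1 hc
    rw [if_pos (by
      refine ⟨fun i => ?_, fun i j hij => ?_⟩
      · rw [hE]; exact hc'.1 i
      · rw [hE, hE]; exact hc'.2 i j hij)]
    rw [ENNReal.toReal_mul, ENNReal.toReal_inv, ENNReal.toReal_pow,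
      ENNReal.toReal_prod]
    simp only [hE, ENNReal.toReal_natCast, ENNReal.toReal_inv]
    rw [← Equiv.prod_comp (finCongr hlen).symm
      (fun i => ((gK i : ℝ) ^ (m :: List.replicate n 1).get i)⁻¹)]
    rw [Fin.prod_univ_succ]
    have hg0 : (m :: List.replicate n 1).get (σ 0) = m := by
      rw [mt_get]; simp [hval]
    have hgs : ∀ i : Fin n, (m :: List.replicate n 1).get (σ i.succ) = 1 := by
      intro i
      rw [mt_get, if_neg]
      rw [hval]
      simp [Fin.val_succ]
    show (((gK (σ 0) : ℝ)) ^ (m :: List.replicate n 1).get (σ 0))⁻¹ *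
        ∏ i : Fin n, (((gK (σ i.succ) : ℝ)) ^ (m :: List.replicate n 1).get (σ i.succ))⁻¹
      = ((gK (σ 0) : ℝ) ^ m)⁻¹ * ∏ i : Fin n, ((gK (σ i.succ) : ℝ))⁻¹
    rw [hg0]
    congr 1
    exact Finset.prod_congr rfl fun i _ => by rw [hgs i, pow_one]
  · rw [if_neg hc]
    unfold mtPhi
    rw [if_neg (by
      intro hcc
      exact hc (hcond.2 ⟨fun i => by rw [← hE]; exact hcc.1 i,
        fun i j hij => by rw [← hE, ← hE]; exact hcc.2 i j hij⟩))]
    simp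

lemma multT_formula (m n : ℕ) (hm : 2 ≤ m) :
    multT (m :: List.replicate n 1)
      = ∑' k : ℕ, ((2 * (k:ℝ) + 1) ^ m)⁻¹ * mtE n k := by
  rw [multT_eq_toReal, mtS_eq m n hm, ENNReal.toReal_ofReal
    (tsum_nonneg fun k => mul_nonneg (by positivity) (mtE_nonneg n k))]


lemma poch_one (k : ℕ) : poch 1 k = (k.factorial : ℂ) := by
  induction k with
  | zero => simp [poch]
  | succ k ih =>
    rw [poch, Finset.prod_range_succ, ← poch, ih, Nat.factorial_succ]
    push_cast
    ring

lemma poch_half_ne_zero (k : ℕ) : poch (1/2) k ≠ 0 := by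
  unfold poch
  rw [Finset.prod_ne_zero_iff]
  intro i _
  have h : ((1:ℂ)/2 + i) = (((1/2 + (i:ℝ)) : ℝ) : ℂ) := by push_cast; ring
  rw [h, Complex.ofReal_ne_zero]
  positivity

lemma poch_three_half (k : ℕ) : poch (3/2) k = poch (1/2) k * (2 * k + 1) := by
  induction k with
  | zero => simp [poch]
  | succ k ih =>
    rw [poch, Finset.prod_range_succ, ← poch, ih]
    rw [show poch (1/2) (k+1) = poch (1/2) k * (1/2 + k) from by
      rw [poch, Finset.prod_range_succ, ← poch]]
    push_cast
    ring

lemma poch_ratio (v : ℝ) (k : ℕ) :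
    poch ((1 + (v:ℂ)) / 2) k / poch (1/2) k
      = ∏ j ∈ Finset.range k, (1 + (v:ℂ) * (2 * (j:ℂ) + 1)⁻¹) := by
  unfold poch
  rw [← Finset.prod_div_distrib]
  refine Finset.prod_congr rfl fun j _ => ?_
  have h1 : ((1:ℂ)/2 + j) ≠ 0 := by
    have h : ((1:ℂ)/2 + j) = (((1/2 + (j:ℝ)) : ℝ) : ℂ) := by push_cast; ring
    rw [h, Complex.ofReal_ne_zero]
    positivity
  have h2 : ((2:ℂ) * j + 1) ≠ 0 := by
    have h : ((2:ℂ) * j + 1) = (((2 * (j:ℝ) + 1) : ℝ) : ℂ) := by push_cast; ring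
    rw [h, Complex.ofReal_ne_zero]
    positivity
  have h2' : ((1:ℂ) + (j:ℂ) * 2) ≠ 0 := by
    rw [show ((1:ℂ) + (j:ℂ) * 2) = 2 * (j:ℂ) + 1 from by ring]
    exact h2
  rw [div_eq_iff h1]
  field_simp
  ring

lemma hyp_term (m' : ℕ) (v : ℝ) (k : ℕ) :
    ((((1 + (v:ℂ)) / 2) :: (1:ℂ) :: List.replicate (m' + 1) (1/2 : ℂ)).map
        (fun a => poch a k)).prod /
        ((k.factorial : ℂ) *
          ((List.replicate (m' + 2) ((3:ℂ)/2)).map (fun b => poch b k)).prod) *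
        (1:ℂ) ^ k
      = ((((2 * (k:ℝ) + 1) ^ (m' + 2))⁻¹ *
          ∏ j ∈ Finset.range k, (1 + v * (2 * (j:ℝ) + 1)⁻¹) : ℝ) : ℂ) := by
  have hC : ((2:ℂ) * k + 1) ≠ 0 := by
    have h : ((2:ℂ) * k + 1) = (((2 * (k:ℝ) + 1) : ℝ) : ℂ) := by push_cast; ring
    rw [h, Complex.ofReal_ne_zero]
    positivity
  have hF : ((k.factorial : ℂ)) ≠ 0 := Nat.cast_ne_zero.mpr k.factorial_ne_zero
  have hP := poch_half_ne_zero k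
  simp only [List.map_cons, List.prod_cons, List.map_replicate, List.prod_replicate,
    poch_one, one_pow, mul_one]
  rw [poch_three_half]
  have hRHS : ((((2 * (k:ℝ) + 1) ^ (m' + 2))⁻¹ *
      ∏ j ∈ Finset.range k, (1 + v * (2 * (j:ℝ) + 1)⁻¹) : ℝ) : ℂ)
      = (((2:ℂ) * k + 1) ^ (m' + 2))⁻¹ *
        ∏ j ∈ Finset.range k, (1 + (v:ℂ) * (2 * (j:ℂ) + 1)⁻¹) := by
    rw [Complex.ofReal_mul, Complex.ofReal_inv, Complex.ofReal_pow, Complex.ofReal_prod]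
    congr 1
    · norm_num
    · refine Finset.prod_congr rfl fun j _ => ?_
      push_cast
      ring
  rw [hRHS, ← poch_ratio]
  rw [mul_pow]
  field_simp
  ring

end mtAux


/-- For `m ≥ 2`, the generating function `∑_{n ≥ 1} t(m, {1}^{n-1}) v^{n-1}` equals the
generalized hypergeometric function `_{m+1}F_m((1+v)/2, 1, {1/2}^{m-1}; {3/2}^m; 1)`. -/
theorem height_one_fixed_first_entry_multiple_t (m : ℕ) (hm : 2 ≤ m) :
    ∃ δ > (0 : ℝ), ∀ v : ℝ, |v| < δ →
      Summable (fun n : ℕ => multT (m :: List.replicate n 1) * v ^ n) ∧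
      ((∑' n : ℕ, multT (m :: List.replicate n 1) * v ^ n : ℝ) : ℂ)
        = hypF (((1 + (v : ℂ)) / 2) :: (1 : ℂ) :: List.replicate (m - 1) (1 / 2))
            (List.replicate m (3 / 2)) 1 := by
  obtain ⟨m', rfl⟩ : ∃ m', m = m' + 2 := ⟨m - 2, by omega⟩
  refine ⟨1/2, by norm_num, fun v hv => ?_⟩
  have hm2 : 2 ≤ m' + 2 := by omega
  have hvle : |v| ≤ 1/2 := le_of_lt hv
  have hv0 : (0:ℝ) ≤ |v| := abs_nonneg v
  have hckpos : ∀ k : ℕ, (0:ℝ) ≤ ((2 * (k:ℝ) + 1) ^ (m' + 2))⁻¹ := fun k => by positivity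
  have hQ : Summable (fun p : ℕ × ℕ =>
      ((2 * (p.1:ℝ) + 1) ^ (m' + 2))⁻¹ * (mtE p.2 p.1 * |v| ^ p.2)) := by
    refine (summable_prod_of_nonneg (fun p => mul_nonneg (hckpos p.1)
      (mul_nonneg (mtE_nonneg _ _) (by positivity)))).2 ⟨fun k => ?_, ?_⟩
    · refine summable_of_ne_finset_zero (s := Finset.range (k+1)) (fun n hn => ?_)
      rw [mtE_eq_zero (by simpa using hn)]
      ring
    · refine Summable.of_nonneg_of_le
        (fun k => tsum_nonneg fun n => mul_nonneg (hckpos k)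
          (mul_nonneg (mtE_nonneg _ _) (by positivity)))
        (fun k => ?_) (mt_summable_bound (m' + 2) hm2)
      show ∑' n : ℕ, ((2 * (k:ℝ) + 1) ^ (m' + 2))⁻¹ * (mtE n k * |v| ^ n)
        ≤ ((2 * (k:ℝ) + 1) ^ (m' + 2))⁻¹ * Real.sqrt (2 * k + 1)
      rw [tsum_mul_left, mtE_tsum |v| k]
      exact mul_le_mul_of_nonneg_left (mt_prod_bound hv0 hvle k) (hckpos k)
  have habs_eq : ∀ p : ℕ × ℕ,
      ((2 * (p.1:ℝ) + 1) ^ (m' + 2))⁻¹ * (mtE p.2 p.1 * |v| ^ p.2)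
        = |((2 * (p.1:ℝ) + 1) ^ (m' + 2))⁻¹ * (mtE p.2 p.1 * v ^ p.2)| := by
    intro p
    rw [abs_mul, abs_mul, abs_pow, abs_of_nonneg (hckpos p.1),
      abs_of_nonneg (mtE_nonneg _ _)]
  have hP : Summable (fun p : ℕ × ℕ =>
      ((2 * (p.1:ℝ) + 1) ^ (m' + 2))⁻¹ * (mtE p.2 p.1 * v ^ p.2)) :=
    Summable.of_abs (hQ.congr habs_eq)
  have hrow : ∀ k : ℕ,
      Summable (fun n : ℕ => ((2 * (k:ℝ) + 1) ^ (m' + 2))⁻¹ * (mtE n k * v ^ n)) := by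
    intro k
    refine summable_of_ne_finset_zero (s := Finset.range (k+1)) (fun n hn => ?_)
    rw [mtE_eq_zero (by simpa using hn)]
    ring
  have hcol : ∀ n : ℕ,
      Summable (fun k : ℕ => ((2 * (k:ℝ) + 1) ^ (m' + 2))⁻¹ * (mtE n k * v ^ n)) :=
    fun n => hP.prod_symm.prod_factor n
  have hmult : ∀ n : ℕ, multT ((m' + 2) :: List.replicate n 1)
      = ∑' k : ℕ, ((2 * (k:ℝ) + 1) ^ (m' + 2))⁻¹ * mtE n k :=
    fun n => multT_formula (m' + 2) n hm2
  have hmnn : ∀ n, 0 ≤ multT ((m' + 2) :: List.replicate n 1) := fun n => by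
    rw [hmult n]
    exact tsum_nonneg fun k => mul_nonneg (hckpos k) (mtE_nonneg _ _)
  have hterm_eq : ∀ n : ℕ, multT ((m' + 2) :: List.replicate n 1) * v ^ n
      = ∑' k : ℕ, ((2 * (k:ℝ) + 1) ^ (m' + 2))⁻¹ * (mtE n k * v ^ n) := by
    intro n
    rw [hmult n, ← tsum_mul_right]
    exact tsum_congr fun k => by ring
  have hterm_abs : ∀ n : ℕ, multT ((m' + 2) :: List.replicate n 1) * |v| ^ n
      = ∑' k : ℕ, ((2 * (k:ℝ) + 1) ^ (m' + 2))⁻¹ * (mtE n k * |v| ^ n) := by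
    intro n
    rw [hmult n, ← tsum_mul_right]
    exact tsum_congr fun k => by ring
  have hmarg : Summable (fun n : ℕ => ∑' k : ℕ,
      ((2 * (k:ℝ) + 1) ^ (m' + 2))⁻¹ * (mtE n k * |v| ^ n)) :=
    ((summable_prod_of_nonneg (fun p => mul_nonneg (hckpos p.2)
      (mul_nonneg (mtE_nonneg _ _) (by positivity)))).1 hQ.prod_symm).2
  have hsummable : Summable (fun n : ℕ => multT ((m' + 2) :: List.replicate n 1) * v ^ n) := by
    refine Summable.of_abs ?_
    refine Summable.of_nonneg_of_le (fun n => abs_nonneg _) (fun n => ?_) hmarg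
    rw [abs_mul, abs_pow, abs_of_nonneg (hmnn n), hterm_abs n]
  refine ⟨hsummable, ?_⟩
  have hval : (∑' n : ℕ, multT ((m' + 2) :: List.replicate n 1) * v ^ n)
      = ∑' k : ℕ, ((2 * (k:ℝ) + 1) ^ (m' + 2))⁻¹ *
          ∏ j ∈ Finset.range k, (1 + v * (2 * (j:ℝ) + 1)⁻¹) := by
    rw [tsum_congr hterm_eq]
    rw [Summable.tsum_comm' (f := fun k n : ℕ =>
      ((2 * (k:ℝ) + 1) ^ (m' + 2))⁻¹ * (mtE n k * v ^ n)) hP hrow hcol]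
    refine tsum_congr fun k => ?_
    rw [tsum_mul_left, mtE_tsum v k]
  rw [hval]
  rw [show ((m' + 2) - 1) = m' + 1 from rfl]
  rw [hypF, Complex.ofReal_tsum]
  exact tsum_congr fun k => (hyp_term m' v k).symm
end

section
/- For every integer m ≥ 2 there exists δ > 0 such that for all real v with |v| < δ, the series ∑_{n ≥ 1} t^*(m, {1}^{n−1}) v^{n−1} converges absolutely and equals (1/(1−v)) times the generalized hypergeometric function _{m+1}F_m with upper parameters 1 and 1/2 repeated m times, lower parameters (3−v)/2 and 3/2 repeated m−1 times, evaluated at 1. -/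
open scoped BigOperators

open scoped ENNReal

namespace THO


/-- `H n a` = complete homogeneous symmetric sum of degree `n` in `1, 1/3, …, 1/(2a+1)`. -/
noncomputable def H : ℕ → ℕ → ℝ
  | 0, _ => 1
  | (n+1), a => ∑ b ∈ Finset.range (a+1), (2*(b:ℝ)+1)⁻¹ * H n b

lemma H_zero (a : ℕ) : H 0 a = 1 := rfl

lemma H_succ (n a : ℕ) : H (n+1) a = ∑ b ∈ Finset.range (a+1), (2*(b:ℝ)+1)⁻¹ * H n b := rfl

lemma H_nonneg (n a : ℕ) : 0 ≤ H n a := by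
  induction n generalizing a with
  | zero => rw [H_zero]; norm_num
  | succ n ih =>
    rw [H_succ]
    exact Finset.sum_nonneg fun b _ => mul_nonneg (by positivity) (ih b)

lemma H_nat_zero (n : ℕ) : H n 0 = 1 := by
  induction n with
  | zero => rfl
  | succ n ih => rw [H_succ]; simp [ih]

lemma H_rec (n a : ℕ) : H (n+1) (a+1) = H (n+1) a + (2*(a:ℝ)+3)⁻¹ * H n (a+1) := by
  rw [H_succ n (a+1), Finset.sum_range_succ, ← H_succ]
  push_cast; ring_nf

lemma H_cauchy (n a : ℕ) :
    H n (a+1) = ∑ j ∈ Finset.range (n+1), H j a * ((2*(a:ℝ)+3)⁻¹) ^ (n - j) := by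
  induction n with
  | zero => simp [H_zero]
  | succ n ih =>
    rw [Finset.sum_range_succ, H_rec, ih, Finset.mul_sum, Finset.sum_congr rfl, Nat.sub_self,
      pow_zero, mul_one, add_comm]
    intro j hj
    have hjn : j ≤ n := Nat.lt_succ_iff.mp (Finset.mem_range.mp hj)
    have : n + 1 - j = (n - j) + 1 := by omega
    rw [this, pow_succ]
    ring

/-- `P a v = ∏_{i=0}^{a} (2i+1)/(2i+1-v)`. -/
noncomputable def P (a : ℕ) (v : ℝ) : ℝ :=
  ∏ i ∈ Finset.range (a+1), (2*(i:ℝ)+1) / (2*(i:ℝ)+1-v)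

lemma P_succ (a : ℕ) (v : ℝ) :
    P (a+1) v = P a v * ((2*(a:ℝ)+3) / (2*(a:ℝ)+3-v)) := by
  rw [P, Finset.prod_range_succ, ← P]; push_cast; ring_nf

lemma P_nonneg {a : ℕ} {v : ℝ} (hv : |v| ≤ 1/2) : 0 ≤ P a v := by
  have hv' : v ≤ 1/2 := le_of_abs_le hv
  refine Finset.prod_nonneg fun i _ => div_nonneg (by positivity) ?_
  have : (1:ℝ)/2 ≤ 2*(i:ℝ)+1 - v := by
    have : (0:ℝ) ≤ (i:ℝ) := Nat.cast_nonneg i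
    linarith
  linarith

lemma hasSum_H (a : ℕ) : ∀ v : ℝ, |v| ≤ 1/2 → HasSum (fun n => H n a * v ^ n) (P a v) := by
  induction a with
  | zero =>
    intro v hv
    have h1 : |v| < 1 := lt_of_le_of_lt hv (by norm_num)
    have := hasSum_geometric_of_norm_lt_one (ξ := v) (by rwa [Real.norm_eq_abs])
    have hP : P 0 v = (1 - v)⁻¹ := by
      rw [P]; norm_num
    rw [hP]
    simpa [H_nat_zero] using this
  | succ a ih =>
    intro v hv
    have hf : Summable fun n => ‖H n a * v ^ n‖ := by
      have := (ih (abs v) (by rw [abs_abs]; exact hv)).summable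
      refine this.congr fun n => ?_
      rw [Real.norm_eq_abs, abs_mul, abs_of_nonneg (H_nonneg n a), abs_pow]
    have hr : |v * (2*(a:ℝ)+3)⁻¹| < 1 := by
      rw [abs_mul]
      have h3 : (0:ℝ) < 2*(a:ℝ)+3 := by positivity
      have : |(2*(a:ℝ)+3)⁻¹| = (2*(a:ℝ)+3)⁻¹ := abs_of_pos (by positivity)
      rw [this]
      calc |v| * (2*(a:ℝ)+3)⁻¹ ≤ (1/2) * (2*(a:ℝ)+3)⁻¹ := by
            apply mul_le_mul_of_nonneg_right hv (by positivity)
        _ < 1 := by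
            rw [div_mul_eq_mul_div, mul_comm]
            have : (2*(a:ℝ)+3)⁻¹ ≤ 1/3 := by
              rw [inv_le_comm₀ h3 (by norm_num)]
              have : (0:ℝ) ≤ (a:ℝ) := Nat.cast_nonneg a
              linarith
            linarith
    have hg : Summable fun n => ‖(v * (2*(a:ℝ)+3)⁻¹) ^ n‖ := by
      simp_rw [norm_pow]
      exact summable_geometric_of_lt_one (norm_nonneg _) (by rwa [Real.norm_eq_abs])
    have key := hasSum_sum_range_mul_of_summable_norm hf hg
    rw [(ih v hv).tsum_eq, (hasSum_geometric_of_norm_lt_one (by rwa [Real.norm_eq_abs])).tsum_eq]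
      at key
    have heq : ∀ n, (∑ k ∈ Finset.range (n+1),
        (H k a * v ^ k) * (v * (2*(a:ℝ)+3)⁻¹) ^ (n - k)) = H n (a+1) * v ^ n := by
      intro n
      rw [H_cauchy, Finset.sum_mul]
      refine Finset.sum_congr rfl fun k hk => ?_
      have hkn : k ≤ n := Nat.lt_succ_iff.mp (Finset.mem_range.mp hk)
      rw [mul_pow]
      have : v ^ k * v ^ (n - k) = v ^ n := by
        rw [← pow_add]; congr 1; omega
      ring_nf
      rw [mul_assoc (H k a), this]
    rw [show (fun n => ∑ k ∈ Finset.range (n+1),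
        (H k a * v ^ k) * (v * (2*(a:ℝ)+3)⁻¹) ^ (n - k)) = fun n => H n (a+1) * v ^ n
      from funext heq] at key
    have hPs : P a v * (1 - v * (2*(a:ℝ)+3)⁻¹)⁻¹ = P (a+1) v := by
      rw [P_succ]
      congr 1
      have h3 : (2*(a:ℝ)+3) ≠ 0 := by positivity
      have h3v : (2*(a:ℝ)+3-v) ≠ 0 := by
        have : v ≤ 1/2 := le_of_abs_le hv
        have : (0:ℝ) ≤ (a:ℝ) := Nat.cast_nonneg a
        intro h; nlinarith [le_of_abs_le hv]
      field_simp
    rwa [hPs] at key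



lemma half12 : |(1/2 : ℝ)| ≤ 1/2 := by rw [abs_of_nonneg] <;> norm_num

lemma Phalf_sq (a : ℕ) : (P a (1/2))^2 ≤ 4*((a:ℝ)+1) := by
  induction a with
  | zero => rw [P]; norm_num
  | succ a ih =>
    have hP := P_nonneg (a := a) (v := (1/2:ℝ)) half12
    rw [P, Finset.prod_range_succ, ← P, mul_pow]
    push_cast
    have ha0 : (0:ℝ) ≤ (a:ℝ) := Nat.cast_nonneg a
    have hden : (0:ℝ) < 2*((a:ℝ)+1)+1-1/2 := by linarith
    have hfac : ((2*((a:ℝ)+1)+1) / (2*((a:ℝ)+1)+1-1/2))^2 ≤ (((a:ℝ)+2))/((a:ℝ)+1) := by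
      rw [div_pow, div_le_div_iff₀ (by nlinarith) (by positivity)]
      nlinarith
    calc P a (1/2)^2 * ((2*((a:ℝ)+1)+1) / (2*((a:ℝ)+1)+1-1/2))^2
        ≤ (4*((a:ℝ)+1)) * (((a:ℝ)+2)/((a:ℝ)+1)) := by
          apply mul_le_mul ih hfac (by positivity) (by positivity)
      _ = 4*((a:ℝ)+1+1) := by
          have ha : (0:ℝ) < (a:ℝ)+1 := by positivity
          field_simp; ring
  
lemma P_le (a : ℕ) {v : ℝ} (hv : |v| ≤ 1/2) : P a v ≤ 2 * Real.sqrt ((a:ℝ)+1) := by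
  have h1 : P a v ≤ P a (1/2) := by
    refine Finset.prod_le_prod (fun i _ => ?_) (fun i _ => ?_)
    · apply div_nonneg (by positivity)
      have := le_of_abs_le hv
      have : (0:ℝ) ≤ (i:ℝ) := Nat.cast_nonneg i
      linarith [le_of_abs_le hv]
    · have hi : (0:ℝ) ≤ (i:ℝ) := Nat.cast_nonneg i
      apply div_le_div_of_nonneg_left (by positivity) (by linarith)
      linarith [le_of_abs_le hv]
  have h2 : P a (1/2) ≤ 2 * Real.sqrt ((a:ℝ)+1) := by
    have hs : (2 * Real.sqrt ((a:ℝ)+1))^2 = 4*((a:ℝ)+1) := by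
      rw [mul_pow, Real.sq_sqrt (by positivity)]; ring
    have := Phalf_sq a
    nlinarith [P_nonneg (a := a) (v := (1/2:ℝ)) half12,
      Real.sqrt_nonneg ((a:ℝ)+1)]
  linarith

lemma H_le (n a : ℕ) : H n a ≤ 2^n * (2 * Real.sqrt ((a:ℝ)+1)) := by
  have hs := hasSum_H a (1/2) half12
  have hterm : H n a * (1/2:ℝ)^n ≤ P a (1/2) := by
    apply le_hasSum hs n
    intro b _
    exact mul_nonneg (H_nonneg b a) (by positivity)
  have h2 : H n a * (1/2:ℝ)^n ≤ 2 * Real.sqrt ((a:ℝ)+1) :=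
    le_trans hterm (P_le a half12)
  have : H n a = (H n a * (1/2:ℝ)^n) * 2^n := by
    rw [mul_assoc, ← mul_pow]; norm_num
  rw [this]
  calc (H n a * (1/2:ℝ)^n) * 2^n ≤ (2 * Real.sqrt ((a:ℝ)+1)) * 2^n := by
        apply mul_le_mul_of_nonneg_right h2 (by positivity)
    _ = 2^n * (2 * Real.sqrt ((a:ℝ)+1)) := by ring

/-- The majorant is summable. -/
lemma summable_majorant {m : ℕ} (hm : 2 ≤ m) :
    Summable (fun a : ℕ => ((2*(a:ℝ)+1)^m)⁻¹ * (2 * Real.sqrt ((a:ℝ)+1))) := by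
  have hbase : Summable (fun a : ℕ => 2 * ((a:ℝ)+1)^(-(3/2:ℝ))) := by
    apply Summable.mul_left
    have : Summable (fun n : ℕ => ((n:ℝ)^(3/2:ℝ))⁻¹) :=
      Real.summable_nat_rpow_inv.mpr (by norm_num)
    have := (summable_nat_add_iff 1).mpr this
    refine this.congr fun a => ?_
    rw [← Real.rpow_neg (by positivity)]
    push_cast
    norm_num
  refine Summable.of_nonneg_of_le (fun a => by positivity) (fun a => ?_) hbase
  have ha1 : (0:ℝ) < (a:ℝ)+1 := by positivity
  have hsq : Real.sqrt ((a:ℝ)+1) * Real.sqrt ((a:ℝ)+1) = (a:ℝ)+1 :=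
    Real.mul_self_sqrt (by positivity)
  have hpow : ((a:ℝ)+1)^2 ≤ (2*(a:ℝ)+1)^m := by
    calc ((a:ℝ)+1)^2 ≤ (2*(a:ℝ)+1)^2 := by nlinarith [Nat.cast_nonneg (α := ℝ) a]
      _ ≤ (2*(a:ℝ)+1)^m := by
        apply pow_le_pow_right₀ (by linarith [Nat.cast_nonneg (α := ℝ) a]) hm
  have hrw : ((a:ℝ)+1)^(-(3/2:ℝ)) = Real.sqrt ((a:ℝ)+1) / ((a:ℝ)+1)^2 := by
    rw [eq_div_iff (by positivity), Real.sqrt_eq_rpow, ← Real.rpow_natCast (((a:ℝ)+1)) 2,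
      ← Real.rpow_add ha1]
    norm_num
  rw [hrw]
  have h1 : ((2*(a:ℝ)+1)^m)⁻¹ ≤ (((a:ℝ)+1)^2)⁻¹ := by
    apply inv_anti₀ (by positivity) hpow
  calc ((2*(a:ℝ)+1)^m)⁻¹ * (2 * Real.sqrt ((a:ℝ)+1))
      ≤ (((a:ℝ)+1)^2)⁻¹ * (2 * Real.sqrt ((a:ℝ)+1)) := by
        apply mul_le_mul_of_nonneg_right h1 (by positivity)
    _ = 2 * (Real.sqrt ((a:ℝ)+1) / ((a:ℝ)+1)^2) := by
        rw [div_eq_mul_inv]; ring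



/-- Bounded star-sum in `ℝ≥0∞`. -/
noncomputable def SB (n b : ℕ) : ℝ≥0∞ :=
  ∑' f : Fin n → ℕ,
    if (∀ i, Odd (f i)) ∧ (∀ i j : Fin n, i < j → f j ≤ f i) ∧ (∀ i, f i ≤ b) then
      ∏ i, ((f i : ℝ≥0∞))⁻¹
    else 0

lemma SB_zero (b : ℕ) : SB 0 b = 1 := by
  rw [SB]
  have h : ∀ f : Fin 0 → ℕ,
      (if (∀ i, Odd (f i)) ∧ (∀ i j : Fin 0, i < j → f j ≤ f i) ∧ (∀ i, f i ≤ b) then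
        ∏ i, ((f i : ℝ≥0∞))⁻¹ else 0) = 1 := by
    intro f
    rw [if_pos ⟨fun i => i.elim0, fun i => i.elim0, fun i => i.elim0⟩, Finset.univ_eq_empty,
      Finset.prod_empty]
  rw [tsum_congr h]
  haveI : Unique (Fin 0 → ℕ) := ⟨⟨fun i => i.elim0⟩, fun f => funext fun i => i.elim0⟩
  rw [tsum_eq_single (default : Fin 0 → ℕ) (fun b hb => (hb (Subsingleton.elim b _)).elim)]

lemma cons_cond (n x b : ℕ) (g : Fin n → ℕ) :
    ((∀ i, Odd ((Fin.cons (α := fun _ => ℕ) x g) i)) ∧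
      (∀ i j : Fin (n+1), i < j → (Fin.cons (α := fun _ => ℕ) x g) j ≤ (Fin.cons (α := fun _ => ℕ) x g) i) ∧
      (∀ i, (Fin.cons (α := fun _ => ℕ) x g) i ≤ b))
    ↔ ((Odd x ∧ x ≤ b) ∧
        ((∀ i, Odd (g i)) ∧ (∀ i j : Fin n, i < j → g j ≤ g i) ∧ (∀ i, g i ≤ x))) := by
  constructor
  · rintro ⟨h1, h2, h3⟩
    refine ⟨⟨by simpa using h1 0, by simpa using h3 0⟩,
      fun i => by simpa using h1 i.succ,
      fun i j hij => by
        simpa using h2 i.succ j.succ (by simpa [Fin.succ_lt_succ_iff] using hij),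
      fun i => by simpa using h2 0 i.succ (Fin.succ_pos i)⟩
  · rintro ⟨⟨hox, hxb⟩, hog, hdec, hle⟩
    refine ⟨fun i => ?_, fun i j hij => ?_, fun i => ?_⟩
    · rcases Fin.eq_zero_or_eq_succ i with rfl | ⟨i', rfl⟩
      · simpa using hox
      · simpa using hog i'
    · rcases Fin.eq_zero_or_eq_succ j with rfl | ⟨j', rfl⟩
      · exact absurd hij (Fin.not_lt_zero i)
      · rcases Fin.eq_zero_or_eq_succ i with rfl | ⟨i', rfl⟩
        · simpa using hle j'
        · simpa using hdec i' j' (by simpa [Fin.succ_lt_succ_iff] using hij)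
    · rcases Fin.eq_zero_or_eq_succ i with rfl | ⟨i', rfl⟩
      · simpa using hxb
      · simpa using le_trans (hle i') hxb

lemma cons_cond' (n x : ℕ) (g : Fin n → ℕ) :
    ((∀ i, Odd ((Fin.cons (α := fun _ => ℕ) x g) i)) ∧
      (∀ i j : Fin (n+1), i < j → (Fin.cons (α := fun _ => ℕ) x g) j ≤ (Fin.cons (α := fun _ => ℕ) x g) i))
    ↔ (Odd x ∧
        ((∀ i, Odd (g i)) ∧ (∀ i j : Fin n, i < j → g j ≤ g i) ∧ (∀ i, g i ≤ x))) := by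
  have h := cons_cond n x (x) g
  constructor
  · rintro ⟨h1, h2⟩
    have h3 : ∀ i, (Fin.cons (α := fun _ => ℕ) x g) i ≤ x := by
      intro i
      rcases Fin.eq_zero_or_eq_succ i with rfl | ⟨i', rfl⟩
      · simp
      · simpa using h2 0 i'.succ (Fin.succ_pos i')
    exact ⟨((h.mp ⟨h1, h2, h3⟩).1).1, (h.mp ⟨h1, h2, h3⟩).2⟩
  · rintro ⟨hox, hg⟩
    have := h.mpr ⟨⟨hox, le_rfl⟩, hg⟩
    exact ⟨this.1, this.2.1⟩

lemma SB_succ (n b : ℕ) :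
    SB (n+1) b = ∑' x : ℕ, if Odd x ∧ x ≤ b then ((x : ℝ≥0∞))⁻¹ * SB n x else 0 := by
  rw [SB, ← (Fin.consEquiv (fun _ : Fin (n+1) => ℕ)).tsum_eq, ENNReal.tsum_prod']
  apply tsum_congr
  intro x
  by_cases hx : Odd x ∧ x ≤ b
  · rw [if_pos hx, SB, ← ENNReal.tsum_mul_left]
    apply tsum_congr
    intro g
    have he : (Fin.consEquiv (fun _ : Fin (n+1) => ℕ)) (x, g) = (Fin.cons (α := fun _ => ℕ) x g) := rfl
    rw [he]
    by_cases hg : (∀ i, Odd (g i)) ∧ (∀ i j : Fin n, i < j → g j ≤ g i) ∧ (∀ i, g i ≤ x)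
    · rw [if_pos ((cons_cond n x b g).mpr ⟨hx, hg⟩), if_pos hg, Fin.prod_univ_succ]
      simp [Fin.cons_zero, Fin.cons_succ]
    · rw [if_neg, if_neg hg, mul_zero]
      intro hc
      exact hg ((cons_cond n x b g).mp hc).2
  · rw [if_neg hx]
    have hz : ∀ g : Fin n → ℕ,
        (if (∀ i, Odd ((Fin.consEquiv (fun _ : Fin (n+1) => ℕ)) (x, g) i)) ∧
            (∀ i j : Fin (n+1), i < j →
              (Fin.consEquiv (fun _ : Fin (n+1) => ℕ)) (x, g) j ≤
                (Fin.consEquiv (fun _ : Fin (n+1) => ℕ)) (x, g) i) ∧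
            (∀ i, (Fin.consEquiv (fun _ : Fin (n+1) => ℕ)) (x, g) i ≤ b) then
          ∏ i, (((Fin.consEquiv (fun _ : Fin (n+1) => ℕ)) (x, g) i : ℝ≥0∞))⁻¹ else 0) = 0 := by
      intro g
      rw [if_neg]
      intro hc
      exact hx ((cons_cond n x b g).mp hc).1
    rw [tsum_congr hz, tsum_zero]

lemma tsum_odd (F : ℕ → ℝ≥0∞) (hF : ∀ x, ¬ Odd x → F x = 0) :
    ∑' x, F x = ∑' a, F (2*a+1) := by
  symm
  apply Function.Injective.tsum_eq (g := fun a : ℕ => 2*a+1)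
  · intro a b h; simp only [] at h; omega
  · intro x hxs
    rcases Nat.even_or_odd x with he | ho
    · exact absurd (hF x (Nat.not_odd_iff_even.mpr he)) hxs
    · obtain ⟨k, hk⟩ := ho
      exact ⟨k, by simp only []; omega⟩

/-- ENNReal version of `H`. -/
noncomputable def HE (n a : ℕ) : ℝ≥0∞ := ENNReal.ofReal (H n a)

lemma HE_zero (a : ℕ) : HE 0 a = 1 := by
  rw [HE]; show ENNReal.ofReal (H 0 a) = 1
  rw [show H 0 a = 1 from rfl, ENNReal.ofReal_one]

lemma HE_succ (n a : ℕ) :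
    HE (n+1) a = ∑ b ∈ Finset.range (a+1), (((2*b+1 : ℕ) : ℝ≥0∞))⁻¹ * HE n b := by
  rw [HE, show H (n+1) a = ∑ b ∈ Finset.range (a+1), (2*(b:ℝ)+1)⁻¹ * H n b from rfl,
    ENNReal.ofReal_sum_of_nonneg (fun b _ => mul_nonneg (by positivity) (H_nonneg n b))]
  refine Finset.sum_congr rfl fun b _ => ?_
  rw [ENNReal.ofReal_mul (by positivity), ENNReal.ofReal_inv_of_pos (by positivity), HE]
  congr 2
  rw [show (2*(b:ℝ)+1) = ((2*b+1 : ℕ) : ℝ) by push_cast; ring, ENNReal.ofReal_natCast]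

lemma SB_odd (n a : ℕ) : SB n (2*a+1) = HE n a := by
  induction n generalizing a with
  | zero => rw [SB_zero, HE_zero]
  | succ n ih =>
    rw [SB_succ, tsum_odd _ (fun x hx => by rw [if_neg]; tauto)]
    have h1 : ∀ c : ℕ,
        (if Odd (2*c+1) ∧ 2*c+1 ≤ 2*a+1 then ((2*c+1 : ℕ) : ℝ≥0∞)⁻¹ * SB n (2*c+1) else 0)
        = if c ∈ Finset.range (a+1) then ((2*c+1 : ℕ) : ℝ≥0∞)⁻¹ * HE n c else 0 := by
      intro c
      by_cases hc : c ≤ a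
      · rw [if_pos ⟨⟨c, by ring⟩, by omega⟩, if_pos (Finset.mem_range.mpr (by omega)), ih]
      · rw [if_neg (by omega), if_neg (by simp [Finset.mem_range]; omega)]
    rw [tsum_congr h1, tsum_eq_sum (s := Finset.range (a+1)) (fun c hc => if_neg hc),
      HE_succ]
    exact Finset.sum_congr rfl fun c hc => by rw [if_pos hc]

/-- ENNReal version of the full star sum for index `(m, 1^n)`. -/
noncomputable def MT (m n : ℕ) : ℝ≥0∞ :=
  ∑' f : Fin (n+1) → ℕ,
    if (∀ i, Odd (f i)) ∧ (∀ i j : Fin (n+1), i < j → f j ≤ f i) then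
      (((f 0 : ℝ≥0∞))^m)⁻¹ * ∏ i : Fin n, ((f i.succ : ℝ≥0∞))⁻¹
    else 0

lemma MT_eq (m n : ℕ) :
    MT m n = ∑' a : ℕ, ((((2*a+1 : ℕ) : ℝ≥0∞))^m)⁻¹ * HE n a := by
  rw [MT, ← (Fin.consEquiv (fun _ : Fin (n+1) => ℕ)).tsum_eq, ENNReal.tsum_prod']
  have step1 : ∀ x : ℕ,
      (∑' g : Fin n → ℕ,
        if (∀ i, Odd ((Fin.consEquiv (fun _ : Fin (n+1) => ℕ)) (x, g) i)) ∧
            (∀ i j : Fin (n+1), i < j →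
              (Fin.consEquiv (fun _ : Fin (n+1) => ℕ)) (x, g) j ≤
                (Fin.consEquiv (fun _ : Fin (n+1) => ℕ)) (x, g) i) then
          ((((Fin.consEquiv (fun _ : Fin (n+1) => ℕ)) (x, g) 0 : ℝ≥0∞))^m)⁻¹ *
            ∏ i : Fin n, (((Fin.consEquiv (fun _ : Fin (n+1) => ℕ)) (x, g) i.succ : ℝ≥0∞))⁻¹
        else 0)
      = if Odd x then (((x : ℝ≥0∞))^m)⁻¹ * SB n x else 0 := by
    intro x
    by_cases hx : Odd x
    · rw [if_pos hx, SB, ← ENNReal.tsum_mul_left]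
      apply tsum_congr
      intro g
      have he : (Fin.consEquiv (fun _ : Fin (n+1) => ℕ)) (x, g)
          = (Fin.cons (α := fun _ => ℕ) x g) := rfl
      rw [he]
      by_cases hg : (∀ i, Odd (g i)) ∧ (∀ i j : Fin n, i < j → g j ≤ g i) ∧ (∀ i, g i ≤ x)
      · rw [if_pos ((cons_cond' n x g).mpr ⟨hx, hg⟩), if_pos hg]
        simp [Fin.cons_zero, Fin.cons_succ]
      · rw [if_neg, if_neg hg, mul_zero]
        intro hc
        exact hg ((cons_cond' n x g).mp hc).2
    · rw [if_neg hx]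
      have hz : ∀ g : Fin n → ℕ,
          (if (∀ i, Odd ((Fin.consEquiv (fun _ : Fin (n+1) => ℕ)) (x, g) i)) ∧
              (∀ i j : Fin (n+1), i < j →
                (Fin.consEquiv (fun _ : Fin (n+1) => ℕ)) (x, g) j ≤
                  (Fin.consEquiv (fun _ : Fin (n+1) => ℕ)) (x, g) i) then
            ((((Fin.consEquiv (fun _ : Fin (n+1) => ℕ)) (x, g) 0 : ℝ≥0∞))^m)⁻¹ *
              ∏ i : Fin n, (((Fin.consEquiv (fun _ : Fin (n+1) => ℕ)) (x, g) i.succ : ℝ≥0∞))⁻¹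
          else 0) = 0 := by
        intro g
        exact if_neg (fun hc => hx ((cons_cond' n x g).mp hc).1)
      rw [tsum_congr hz, tsum_zero]
  rw [tsum_congr step1, tsum_odd _ (fun x hx => if_neg (fun (hc : Odd x) => hx hc))]
  apply tsum_congr
  intro a
  rw [if_pos ⟨a, by ring⟩, SB_odd]



/-- Step 1: transport the list-indexed sum to a `Fin (n+1)` indexed sum. -/
lemma multTStar_cons_rep (m n : ℕ) :
    multTStar (m :: List.replicate n 1)
      = ∑' f : Fin (n+1) → ℕ,
          if (∀ i, Odd (f i)) ∧ (∀ i j : Fin (n+1), i < j → f j ≤ f i) then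
            (((f 0 : ℝ))^m)⁻¹ * ∏ i : Fin n, ((f i.succ : ℝ))⁻¹
          else 0 := by
  have hlen : (m :: List.replicate n 1).length = n + 1 := by simp
  set K := m :: List.replicate n 1 with hK
  rw [multTStar]
  rw [← Equiv.tsum_eq (Equiv.arrowCongr (finCongr hlen.symm) (Equiv.refl ℕ))]
  apply tsum_congr
  intro f
  have happ : ∀ i : Fin K.length,
      (Equiv.arrowCongr (finCongr hlen.symm) (Equiv.refl ℕ)) f i = f (finCongr hlen i) := by
    intro i; rfl
  simp only [happ]
  have hcond : ((∀ i : Fin K.length, Odd (f (finCongr hlen i))) ∧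
      (∀ i j : Fin K.length, i < j → f (finCongr hlen j) ≤ f (finCongr hlen i)))
      ↔ ((∀ i, Odd (f i)) ∧ (∀ i j : Fin (n+1), i < j → f j ≤ f i)) := by
    constructor
    · rintro ⟨h1, h2⟩
      refine ⟨fun i => ?_, fun i j hij => ?_⟩
      · have := h1 ((finCongr hlen).symm i)
        rwa [Equiv.apply_symm_apply] at this
      · have := h2 ((finCongr hlen).symm i) ((finCongr hlen).symm j)
          (by rw [Fin.lt_def] at hij ⊢; exact hij)
        rwa [Equiv.apply_symm_apply, Equiv.apply_symm_apply] at this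
    · rintro ⟨h1, h2⟩
      exact ⟨fun i => h1 _, fun i j hij => h2 _ _ (by rw [Fin.lt_def] at hij ⊢; exact hij)⟩
  by_cases hc : (∀ i, Odd (f i)) ∧ (∀ i j : Fin (n+1), i < j → f j ≤ f i)
  · rw [if_pos (hcond.mpr hc), if_pos hc]
    have hB : ∀ i : Fin K.length, ((f (finCongr hlen i) : ℝ) ^ K.get i)⁻¹
        = (fun i' : Fin (n+1) => ((f i' : ℝ) ^ K.get (Fin.cast hlen.symm i'))⁻¹)
            (finCongr hlen i) := fun i => rfl
    calc ∏ i : Fin K.length, ((f (finCongr hlen i) : ℝ) ^ K.get i)⁻¹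
        = ∏ i' : Fin (n+1), ((f i' : ℝ) ^ K.get (Fin.cast hlen.symm i'))⁻¹ :=
          Equiv.prod_comp (finCongr hlen)
            (fun i' => ((f i' : ℝ) ^ K.get (Fin.cast hlen.symm i'))⁻¹)
      _ = (((f 0 : ℝ))^m)⁻¹ * ∏ i : Fin n, ((f i.succ : ℝ))⁻¹ := by
          rw [Fin.prod_univ_succ]
          have h0 : K.get (Fin.cast hlen.symm 0) = m := rfl
          rw [h0]
          congr 1
          refine Finset.prod_congr rfl fun i _ => ?_
          have h1 : K.get (Fin.cast hlen.symm i.succ) = 1 := by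
            rw [List.get_eq_getElem]
            show (m :: List.replicate n 1)[(i:ℕ)+1] = 1
            rw [List.getElem_cons_succ, List.getElem_replicate]
          rw [h1, pow_one]
  · rw [if_neg (fun hcc => hc (hcond.mp hcc)), if_neg hc]

/-- Step 2: the key real identity and summability. -/
lemma key_eq {m : ℕ} (hm : 2 ≤ m) (n : ℕ) :
    multTStar (m :: List.replicate n 1) = ∑' a : ℕ, ((2*(a:ℝ)+1)^m)⁻¹ * H n a
    ∧ Summable (fun a : ℕ => ((2*(a:ℝ)+1)^m)⁻¹ * H n a) := by
  -- the ENNReal sum is the ofReal of the real summand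
  have hterm : ∀ a : ℕ, ((((2*a+1 : ℕ) : ℝ≥0∞))^m)⁻¹ * HE n a
      = ENNReal.ofReal (((2*(a:ℝ)+1)^m)⁻¹ * H n a) := by
    intro a
    have hp0 : (0:ℝ) < ((2*a+1 : ℕ) : ℝ) := by exact_mod_cast Nat.succ_pos (2*a)
    rw [HE, ENNReal.ofReal_mul (by positivity), ← ENNReal.ofReal_natCast (2*a+1),
      ← ENNReal.ofReal_pow hp0.le, ← ENNReal.ofReal_inv_of_pos (pow_pos hp0 m)]
    congr 2
    push_cast
    ring
  -- finiteness of the ENNReal sum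
  have hbnd : Summable (fun a : ℕ => ((2*(a:ℝ)+1)^m)⁻¹ * (2^n * (2 * Real.sqrt ((a:ℝ)+1)))) := by
    have := (summable_majorant hm).mul_left ((2:ℝ)^n)
    refine this.congr fun a => ?_
    ring
  have hfin : (∑' a : ℕ, ENNReal.ofReal (((2*(a:ℝ)+1)^m)⁻¹ * H n a)) ≠ ⊤ := by
    have hle : (∑' a : ℕ, ENNReal.ofReal (((2*(a:ℝ)+1)^m)⁻¹ * H n a))
        ≤ ∑' a : ℕ, ENNReal.ofReal (((2*(a:ℝ)+1)^m)⁻¹ * (2^n * (2 * Real.sqrt ((a:ℝ)+1)))) := by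
      apply ENNReal.tsum_le_tsum
      intro a
      apply ENNReal.ofReal_le_ofReal
      exact mul_le_mul_of_nonneg_left (H_le n a) (by positivity)
    have := ENNReal.ofReal_tsum_of_nonneg (fun a => by positivity) hbnd
    rw [← this] at hle
    exact ne_top_of_le_ne_top ENNReal.ofReal_ne_top hle
  have hMTfin : MT m n ≠ ⊤ := by
    rw [MT_eq]
    rwa [tsum_congr hterm]
  -- summability
  have hsummable : Summable (fun a : ℕ => ((2*(a:ℝ)+1)^m)⁻¹ * H n a) := by
    have := ENNReal.summable_toReal hfin
    refine this.congr fun a => ?_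
    rw [ENNReal.toReal_ofReal (mul_nonneg (by positivity) (H_nonneg n a))]
  refine ⟨?_, hsummable⟩
  -- pointwise toReal of the ENNReal integrand of MT
  have hpt : ∀ f : Fin (n+1) → ℕ,
      (if (∀ i, Odd (f i)) ∧ (∀ i j : Fin (n+1), i < j → f j ≤ f i) then
        (((f 0 : ℝ))^m)⁻¹ * ∏ i : Fin n, ((f i.succ : ℝ))⁻¹ else 0)
      = (if (∀ i, Odd (f i)) ∧ (∀ i j : Fin (n+1), i < j → f j ≤ f i) then
        (((f 0 : ℝ≥0∞))^m)⁻¹ * ∏ i : Fin n, ((f i.succ : ℝ≥0∞))⁻¹ else 0).toReal := by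
    intro f
    by_cases hc : (∀ i, Odd (f i)) ∧ (∀ i j : Fin (n+1), i < j → f j ≤ f i)
    · rw [if_pos hc, if_pos hc, ENNReal.toReal_mul, ENNReal.toReal_inv, ENNReal.toReal_pow,
        ENNReal.toReal_natCast, ENNReal.toReal_prod]
      congr 1
      refine Finset.prod_congr rfl fun i _ => ?_
      rw [ENNReal.toReal_inv, ENNReal.toReal_natCast]
    · rw [if_neg hc, if_neg hc, ENNReal.toReal_zero]
  have hptne : ∀ f : Fin (n+1) → ℕ,
      (if (∀ i, Odd (f i)) ∧ (∀ i j : Fin (n+1), i < j → f j ≤ f i) then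
        (((f 0 : ℝ≥0∞))^m)⁻¹ * ∏ i : Fin n, ((f i.succ : ℝ≥0∞))⁻¹ else 0) ≠ ⊤ := by
    intro f
    by_cases hc : (∀ i, Odd (f i)) ∧ (∀ i j : Fin (n+1), i < j → f j ≤ f i)
    · rw [if_pos hc]
      have h0 : f 0 ≠ 0 := by
        intro h
        have := hc.1 0
        rw [h] at this
        exact (Nat.not_odd_iff_even.mpr Even.zero) this
      apply ENNReal.mul_ne_top
      · rw [ENNReal.inv_ne_top]
        positivity
      · refine (ENNReal.prod_lt_top ?_).ne
        intro i _
        have hi : f i.succ ≠ 0 := by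
          intro h
          have := hc.1 i.succ
          rw [h] at this
          exact (Nat.not_odd_iff_even.mpr Even.zero) this
        rw [ENNReal.inv_lt_top]
        positivity
    · rw [if_neg hc]
      exact ENNReal.zero_ne_top
  calc multTStar (m :: List.replicate n 1)
      = (MT m n).toReal := by
        rw [multTStar_cons_rep, MT, ENNReal.tsum_toReal_eq hptne]
        exact tsum_congr hpt
    _ = ∑' a : ℕ, ((2*(a:ℝ)+1)^m)⁻¹ * H n a := by
        rw [MT_eq, tsum_congr hterm, ENNReal.tsum_toReal_eq (fun a => ENNReal.ofReal_ne_top)]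
        exact tsum_congr fun a => ENNReal.toReal_ofReal
          (mul_nonneg (by positivity) (H_nonneg n a))



lemma gen_fun {m : ℕ} (hm : 2 ≤ m) {v : ℝ} (hv : |v| ≤ 1/2) :
    Summable (fun n : ℕ => multTStar (m :: List.replicate n 1) * v ^ n) ∧
    ∑' n : ℕ, multTStar (m :: List.replicate n 1) * v ^ n = ∑' a : ℕ, ((2*(a:ℝ)+1)^m)⁻¹ * P a v := by
  have hv' : |(|v|)| ≤ 1/2 := by rwa [abs_abs]
  set r : ℕ → ℕ → ℝ := fun a n => ((2*(a:ℝ)+1)^m)⁻¹ * H n a with hr_def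
  have hrnn : ∀ a n, 0 ≤ r a n := fun a n => mul_nonneg (by positivity) (H_nonneg n a)
  have hr : ∀ a, HasSum (fun n => r a n * v ^ n) (((2*(a:ℝ)+1)^m)⁻¹ * P a v) := by
    intro a
    have := (hasSum_H a v hv).mul_left (((2*(a:ℝ)+1)^m)⁻¹)
    simp only [← mul_assoc] at this
    exact this
  have habs : ∀ a, HasSum (fun n => r a n * |v| ^ n) (((2*(a:ℝ)+1)^m)⁻¹ * P a (|v|)) := by
    intro a
    have := (hasSum_H a (|v|) hv').mul_left (((2*(a:ℝ)+1)^m)⁻¹)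
    simp only [← mul_assoc] at this
    exact this
  have hFabs : Summable (fun p : ℕ × ℕ => r p.1 p.2 * |v| ^ p.2) := by
    rw [summable_prod_of_nonneg (fun p => mul_nonneg (hrnn p.1 p.2) (by positivity))]
    refine ⟨fun a => (habs a).summable, ?_⟩
    have heq : ∀ a : ℕ, ∑' n, r a n * |v| ^ n = ((2*(a:ℝ)+1)^m)⁻¹ * P a (|v|) :=
      fun a => (habs a).tsum_eq
    rw [show (fun a : ℕ => ∑' n, r a n * |v| ^ n)
        = fun a : ℕ => ((2*(a:ℝ)+1)^m)⁻¹ * P a (|v|) from funext heq]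
    refine Summable.of_nonneg_of_le
      (fun a => mul_nonneg (by positivity) (P_nonneg hv'))
      (fun a => ?_) (summable_majorant hm)
    exact mul_le_mul_of_nonneg_left (P_le a hv') (by positivity)
  have hFv : Summable (fun p : ℕ × ℕ => r p.1 p.2 * v ^ p.2) := by
    apply Summable.of_abs
    refine hFabs.congr fun p => ?_
    rw [abs_mul, abs_of_nonneg (hrnn p.1 p.2), abs_pow]
  have hc : ∀ n, multTStar (m :: List.replicate n 1) = ∑' a, r a n := fun n => (key_eq hm n).1
  have hcnn : ∀ n, 0 ≤ multTStar (m :: List.replicate n 1) := by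
    intro n
    rw [hc n]
    exact tsum_nonneg (fun a => hrnn a n)
  have hcv : ∀ w : ℝ, ∀ n, multTStar (m :: List.replicate n 1) * w ^ n = ∑' a, r a n * w ^ n := by
    intro w n
    rw [hc n, ← tsum_mul_right]
  have hsum : Summable (fun n : ℕ => multTStar (m :: List.replicate n 1) * v ^ n) := by
    apply Summable.of_abs
    have hswap : Summable (fun p : ℕ × ℕ => r p.2 p.1 * |v| ^ p.1) := hFabs.prod_symm
    have hmarg := ((summable_prod_of_nonneg
      (fun p : ℕ × ℕ => mul_nonneg (hrnn p.2 p.1) (by positivity))).mp hswap).2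
    refine hmarg.congr fun n => ?_
    rw [abs_mul, abs_of_nonneg (hcnn n), abs_pow, hcv (|v|) n]
  refine ⟨hsum, ?_⟩
  calc ∑' n : ℕ, multTStar (m :: List.replicate n 1) * v ^ n
      = ∑' n : ℕ, ∑' a : ℕ, r a n * v ^ n := tsum_congr (hcv v)
    _ = ∑' a : ℕ, ∑' n : ℕ, r a n * v ^ n := Summable.tsum_comm hFv
    _ = ∑' a : ℕ, ((2*(a:ℝ)+1)^m)⁻¹ * P a v := tsum_congr fun a => (hr a).tsum_eq



noncomputable def N (a : ℕ) : ℂ := ∏ i ∈ Finset.range a, (2*(i:ℂ)+1)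

lemma poch_one (a : ℕ) : poch 1 a = (a.factorial : ℂ) := by
  induction a with
  | zero => simp [poch]
  | succ a ih =>
    rw [poch, Finset.prod_range_succ, ← poch, ih, Nat.factorial_succ]
    push_cast
    ring

lemma N_ne_zero (a : ℕ) : N a ≠ 0 := by
  rw [N]
  apply Finset.prod_ne_zero_iff.mpr
  intro i _
  have : (2*(i:ℂ)+1) = ((2*(i:ℝ)+1 : ℝ) : ℂ) := by push_cast; ring
  rw [this, Complex.ofReal_ne_zero]
  positivity

lemma N_succ (a : ℕ) : N (a+1) = N a * (2*(a:ℂ)+1) := Finset.prod_range_succ _ _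

lemma N_succ' (a : ℕ) : N (a+1) = ∏ i ∈ Finset.range a, (2*(i:ℂ)+3) := by
  rw [N, Finset.prod_range_succ']
  simp only [Nat.cast_add, Nat.cast_one, Nat.cast_zero]
  rw [mul_zero, zero_add, mul_one]
  refine Finset.prod_congr rfl fun i _ => by push_cast; ring

lemma poch_half (a : ℕ) : poch (1/2) a = N a / 2^a := by
  rw [eq_div_iff (pow_ne_zero _ two_ne_zero)]
  induction a with
  | zero => simp [poch, N]
  | succ a ih =>
    rw [poch, Finset.prod_range_succ, ← poch, N_succ, pow_succ]
    have : (1/2 + (a:ℂ)) * 2 = 2*(a:ℂ)+1 := by ring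
    calc poch (1/2) a * (1/2 + (a:ℂ)) * 2^(a+1)
        = (poch (1/2) a * 2^a) * ((1/2 + (a:ℂ)) * 2) := by ring
      _ = N a * (2*(a:ℂ)+1) := by rw [ih, this]

lemma poch_3half (a : ℕ) : poch (3/2) a = N (a+1) / 2^a := by
  rw [eq_div_iff (pow_ne_zero _ two_ne_zero), N_succ']
  induction a with
  | zero => simp [poch]
  | succ a ih =>
    rw [poch, Finset.prod_range_succ, ← poch, Finset.prod_range_succ, pow_succ]
    calc poch (3/2) a * (3/2 + (a:ℂ)) * (2^a * 2)
        = (poch (3/2) a * 2^a) * ((3/2 + (a:ℂ)) * 2) := by ring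
      _ = (∏ i ∈ Finset.range a, (2*(i:ℂ)+3)) * (2*(a:ℂ)+3) := by rw [ih]; ring

noncomputable def D (w : ℂ) (a : ℕ) : ℂ := ∏ i ∈ Finset.range a, (2*(i:ℂ)+3-w)

lemma poch_w (w : ℂ) (a : ℕ) : poch ((3-w)/2) a = D w a / 2^a := by
  rw [eq_div_iff (pow_ne_zero _ two_ne_zero), D]
  induction a with
  | zero => simp [poch]
  | succ a ih =>
    rw [poch, Finset.prod_range_succ, ← poch, Finset.prod_range_succ, pow_succ]
    calc poch ((3-w)/2) a * ((3-w)/2 + (a:ℂ)) * (2^a * 2)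
        = (poch ((3-w)/2) a * 2^a) * (((3-w)/2 + (a:ℂ)) * 2) := by ring
      _ = (∏ i ∈ Finset.range a, (2*(i:ℂ)+3-w)) * (2*(a:ℂ)+3-w) := by rw [ih]; ring

lemma D_ne_zero {v : ℝ} (hv : |v| ≤ 1/2) (a : ℕ) : D (v:ℂ) a ≠ 0 := by
  rw [D]
  apply Finset.prod_ne_zero_iff.mpr
  intro i _
  have : (2*(i:ℂ)+3-(v:ℂ)) = ((2*(i:ℝ)+3-v : ℝ) : ℂ) := by push_cast; ring
  rw [this, Complex.ofReal_ne_zero]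
  have h1 : v ≤ 1/2 := le_of_abs_le hv
  have h2 : (0:ℝ) ≤ (i:ℝ) := Nat.cast_nonneg i
  intro h
  nlinarith

lemma one_sub_ne_zero {v : ℝ} (hv : |v| ≤ 1/2) : (1 - (v:ℂ)) ≠ 0 := by
  have : (1 - (v:ℂ)) = ((1 - v : ℝ) : ℂ) := by push_cast; ring
  rw [this, Complex.ofReal_ne_zero]
  have h1 : v ≤ 1/2 := le_of_abs_le hv
  intro h
  nlinarith

lemma term_eq {m : ℕ} (hm : 2 ≤ m) {v : ℝ} (hv : |v| ≤ 1/2) (a : ℕ) :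
    (1 - (v:ℂ))⁻¹ * ((((1:ℂ) :: List.replicate m (1/2)).map fun x => poch x a).prod /
      ((a.factorial : ℂ) *
        ((((3 - (v:ℂ))/2) :: List.replicate (m-1) (3/2)).map fun x => poch x a).prod)
      * (1:ℂ)^a)
    = ((((2*(a:ℝ)+1)^m)⁻¹ * P a v : ℝ) : ℂ) := by
  obtain ⟨k, rfl⟩ : ∃ k, m = k + 1 := ⟨m - 1, by omega⟩
  rw [List.map_cons, List.map_replicate, List.prod_cons, List.prod_replicate,
    List.map_cons, List.map_replicate, List.prod_cons, List.prod_replicate,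
    Nat.add_sub_cancel, one_pow, mul_one, poch_one, poch_half, poch_3half, poch_w]
  -- cast the RHS
  rw [P, Complex.ofReal_mul, Complex.ofReal_inv, Complex.ofReal_pow, Complex.ofReal_prod]
  have hprod : (∏ i ∈ Finset.range (a+1), (((2*(i:ℝ)+1) / (2*(i:ℝ)+1-v) : ℝ) : ℂ))
      = N (a+1) / ((1 - (v:ℂ)) * D (v:ℂ) a) := by
    have hcast : ∀ i ∈ Finset.range (a+1), (((2*(i:ℝ)+1) / (2*(i:ℝ)+1-v) : ℝ) : ℂ)
        = (2*(i:ℂ)+1) / (2*(i:ℂ)+1-(v:ℂ)) := by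
      intro i _
      push_cast
      ring
    rw [Finset.prod_congr rfl hcast, Finset.prod_div_distrib, ← N]
    congr 1
    rw [Finset.prod_range_succ', D]
    have : ∀ i ∈ Finset.range a, (2*((i:ℂ)+1)+1-(v:ℂ)) = (2*(i:ℂ)+3-(v:ℂ)) := by
      intro i _
      ring
    rw [show ∏ i ∈ Finset.range a, (2*(((i:ℕ)+1 : ℕ):ℂ)+1-(v:ℂ))
        = ∏ i ∈ Finset.range a, (2*(i:ℂ)+3-(v:ℂ)) from
      Finset.prod_congr rfl fun i _ => by push_cast; ring]
    push_cast
    ring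
  rw [hprod, N_succ]
  have h2a : (2*(a:ℂ)+1) ≠ 0 := by
    have : (2*(a:ℂ)+1) = ((2*(a:ℝ)+1 : ℝ) : ℂ) := by push_cast; ring
    rw [this, Complex.ofReal_ne_zero]
    positivity
  have h2 : ((2:ℂ))^a ≠ 0 := pow_ne_zero _ two_ne_zero
  have hfa : ((a.factorial : ℕ) : ℂ) ≠ 0 := Nat.cast_ne_zero.mpr (Nat.factorial_ne_zero a)
  have hN := N_ne_zero a
  have hD := D_ne_zero hv a
  have h1v := one_sub_ne_zero hv
  have hcast2 : (((2*(a:ℝ)+1 : ℝ)) : ℂ) = 2*(a:ℂ)+1 := by push_cast; ring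
  rw [hcast2]
  obtain ⟨u, hu⟩ : ∃ u : ℂ, 1 - (v:ℂ) = u := ⟨_, rfl⟩
  rw [hu] at h1v ⊢
  have hTk : (2*(a:ℂ)+1)^k ≠ 0 := pow_ne_zero _ h2a
  have e1 : (a.factorial:ℂ) * (N a / 2^a)^(k+1) /
      ((a.factorial:ℂ) * (D (v:ℂ) a / 2^a * (N a * (2*(a:ℂ)+1) / 2^a)^k))
      = N a / (D (v:ℂ) a * (2*(a:ℂ)+1)^k) := by
    simp only [mul_pow, div_pow]
    rw [div_eq_div_iff]
    · field_simp
      ring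
    · apply mul_ne_zero hfa
      apply mul_ne_zero (div_ne_zero hD h2)
      exact div_ne_zero (mul_ne_zero (pow_ne_zero _ hN) hTk) (pow_ne_zero _ h2)
    · exact mul_ne_zero hD hTk
  rw [e1, pow_succ]
  field_simp


end THO

/-- For `m ≥ 2`, the generating function `∑_{n ≥ 1} t*(m, {1}^{n-1}) v^{n-1}` equals
`(1/(1-v)) ⬝ _{m+1}F_m(1, {1/2}^m; (3-v)/2, {3/2}^{m-1}; 1)`. -/
theorem height_one_fixed_first_entry_multiple_t_star (m : ℕ) (hm : 2 ≤ m) :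
    ∃ δ > (0 : ℝ), ∀ v : ℝ, |v| < δ →
      Summable (fun n : ℕ => multTStar (m :: List.replicate n 1) * v ^ n) ∧
      ((∑' n : ℕ, multTStar (m :: List.replicate n 1) * v ^ n : ℝ) : ℂ)
        = (1 - (v : ℂ))⁻¹ *
            hypF ((1 : ℂ) :: List.replicate m (1 / 2))
              (((3 - (v : ℂ)) / 2) :: List.replicate (m - 1) (3 / 2)) 1 := by
  refine ⟨1/2, by norm_num, fun v hv => ?_⟩
  have hv' : |v| ≤ 1/2 := le_of_lt hv
  obtain ⟨hsum, heq⟩ := THO.gen_fun hm hv'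
  refine ⟨hsum, ?_⟩
  rw [heq, Complex.ofReal_tsum, hypF, ← tsum_mul_left]
  exact tsum_congr fun a => (THO.term_eq hm hv' a).symm
end

section
/- For all real w with |w| < 1, 1 + ∑_{n ≥ 1} t({2}^n) w^n = exp( ∑_{n ≥ 1} ((−1)^{n−1}/n) t(2n) w^n ), both series converging absolutely; here t({2}^n) is the multiple t-value of the index consisting of the entry 2 repeated n times. -/
open scoped BigOperators

section TGenAux

open Filter

private noncomputable def aa (k : ℕ) : ℝ := ((2 * (k : ℝ) + 1) ^ 2)⁻¹

private lemma aa_pos (k : ℕ) : 0 < aa k := by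
  have : (0:ℝ) < 2 * (k : ℝ) + 1 := by positivity
  unfold aa; positivity

private lemma aa_le_one (k : ℕ) : aa k ≤ 1 := by
  unfold aa
  rw [inv_le_one_iff₀]
  right
  nlinarith [Nat.cast_nonneg (α := ℝ) k]

private lemma summable_aa : Summable aa := by
  have h1 : Summable (fun n : ℕ => 1 / (n : ℝ) ^ 2) :=
    Real.summable_one_div_nat_pow.2 (by norm_num)
  have h2 : Summable (fun n : ℕ => 1 / ((n : ℝ) + 1) ^ 2) := by
    have := (summable_nat_add_iff (f := fun n : ℕ => 1 / (n : ℝ) ^ 2) 1).2 h1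
    simpa using this
  refine h2.of_nonneg_of_le (fun k => (aa_pos k).le) (fun k => ?_)
  unfold aa
  rw [one_div]
  apply inv_anti₀ (by positivity)
  nlinarith [Nat.cast_nonneg (α := ℝ) k]

private lemma summable_prodAbs {f : ℕ → ℝ} (hf : Summable fun i => |f i|) :
    Summable (fun s : Finset ℕ => ∏ i ∈ s, |f i|) := by
  apply summable_of_sum_le (c := Real.exp (∑' i, |f i|))
  · intro s; positivity
  · intro T
    calc ∑ s ∈ T, ∏ i ∈ s, |f i|
        ≤ ∑ s ∈ (T.sup id).powerset, ∏ i ∈ s, |f i| := by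
          apply Finset.sum_le_sum_of_subset_of_nonneg
          · intro s hs
            exact Finset.mem_powerset.2 (Finset.le_sup (f := id) hs)
          · intro s _ _; positivity
      _ = ∏ i ∈ T.sup id, (|f i| + 1) := by
          rw [Finset.prod_add]; simp
      _ ≤ ∏ i ∈ T.sup id, Real.exp (|f i|) := by
          apply Finset.prod_le_prod
          · intro i _; positivity
          · intro i _; exact Real.add_one_le_exp _
      _ = Real.exp (∑ i ∈ T.sup id, |f i|) := (Real.exp_sum _ _).symm
      _ ≤ Real.exp (∑' i, |f i|) :=
          Real.exp_le_exp.2 (Summable.sum_le_tsum _ (fun _ _ => abs_nonneg _) hf)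

private lemma summable_prodf {f : ℕ → ℝ} (hf : Summable fun i => |f i|) :
    Summable (fun s : Finset ℕ => ∏ i ∈ s, f i) := by
  apply Summable.of_abs
  have : (fun s : Finset ℕ => |∏ i ∈ s, f i|) = fun s : Finset ℕ => ∏ i ∈ s, |f i| := by
    funext s; exact Finset.abs_prod s f
  rw [this]
  exact summable_prodAbs hf

private lemma hasProd_one_add {f : ℕ → ℝ} (hf : Summable fun i => |f i|) :
    HasProd (fun i => 1 + f i) (∑' s : Finset ℕ, ∏ i ∈ s, f i) := by
  have hg := (summable_prodf hf).hasSum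
  rw [HasProd]
  have key : ∀ F : Finset ℕ, ∏ i ∈ F, (1 + f i) = ∑ s ∈ F.powerset, ∏ i ∈ s, f i := by
    intro F
    simp_rw [add_comm (1:ℝ)]
    rw [Finset.prod_add]; simp
  have hpw : Tendsto (fun F : Finset ℕ => F.powerset) atTop atTop := by
    apply tendsto_atTop_atTop.2
    intro T
    refine ⟨T.sup id, fun F hF => fun s hs => ?_⟩
    exact Finset.mem_powerset.2 (le_trans (Finset.le_sup (f := id) hs) hF)
  have := (hg : Tendsto _ atTop _).comp hpw
  convert this using 1
  funext F
  exact key F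
  rfl

private lemma multT_replicate (n : ℕ) :
    multT (List.replicate n 2) =
      ∑' s : Finset ℕ, (if s.card = n then ∏ i ∈ s, aa i else 0) := by
  classical
  unfold multT
  have hN : (List.replicate n 2).length = n := List.length_replicate
  set N := (List.replicate n 2).length with hNdef
  set g : Finset ℕ → ℝ := fun s => if s.card = n then ∏ i ∈ s, aa i else 0 with hg
  have hcard : ∀ x : Function.support g, (x : Finset ℕ).card = N := by
    rintro ⟨s, hs⟩
    rw [hN]
    by_contra h
    exact hs (by simp [hg, h])
  apply tsum_eq_tsum_of_ne_zero_bij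
      (i := fun x (j : Fin N) => 2 * ((x : Finset ℕ).orderEmbOfFin (hcard x) j.rev) + 1)
  · rintro ⟨s, hs⟩ ⟨s', hs'⟩ h
    have hk : ∀ j : Fin N,
        s.orderEmbOfFin (hcard ⟨s, hs⟩) j = s'.orderEmbOfFin (hcard ⟨s', hs'⟩) j := by
      intro j
      have := congrFun h j.rev
      simp only [Fin.rev_rev] at this
      omega
    apply Subtype.ext
    apply Finset.coe_injective
    rw [← Finset.range_orderEmbOfFin s (hcard ⟨s, hs⟩),
      ← Finset.range_orderEmbOfFin s' (hcard ⟨s', hs'⟩)]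
    exact congrArg Set.range (funext hk)
  · intro m hm
    have hm' : (∀ i, Odd (m i)) ∧ (∀ i j : Fin N, i < j → m j < m i) := by
      by_contra hcond; exact hm (if_neg hcond)
    obtain ⟨hodd, hdec⟩ := hm'
    set q : Fin N → ℕ := fun j => m j.rev / 2 with hqdef
    have hq : ∀ j, 2 * q j + 1 = m j.rev := by
      intro j
      obtain ⟨c, hc⟩ := hodd j.rev
      simp only [hqdef]
      omega
    have hmono : StrictMono q := by
      intro j j' hlt
      have h1 := hdec j'.rev j.rev (Fin.rev_lt_rev.2 hlt)
      have h2 := hq j; have h3 := hq j'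
      omega
    set s : Finset ℕ := Finset.univ.image q with hsdef
    have hscard : s.card = N := by
      rw [hsdef, Finset.card_image_of_injective _ hmono.injective, Finset.card_univ,
        Fintype.card_fin]
    have hgs : g s ≠ 0 := by
      rw [hg]
      simp only
      rw [if_pos (by rw [← hN]; exact hscard)]
      exact ne_of_gt (Finset.prod_pos fun i _ => aa_pos i)
    refine ⟨⟨s, hgs⟩, ?_⟩
    funext j
    show 2 * (s.orderEmbOfFin (hcard ⟨s, hgs⟩) j.rev) + 1 = m j
    have hemb : q = ⇑(s.orderEmbOfFin (hcard ⟨s, hgs⟩)) :=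
      Finset.orderEmbOfFin_unique _ (fun j => Finset.mem_image_of_mem q (Finset.mem_univ j)) hmono
    have h6 := congrFun hemb j.rev
    have h5 := hq j.rev
    rw [Fin.rev_rev] at h5
    omega
  · rintro ⟨s, hs⟩
    have hc := hcard ⟨s, hs⟩
    simp only
    rw [if_pos]
    · have hval : (fun j : Fin N =>
          (((2 * (s.orderEmbOfFin hc j.rev) + 1 : ℕ) : ℝ) ^ (List.replicate n 2).get j)⁻¹)
          = fun j : Fin N => aa (s.orderEmbOfFin hc j.rev) := by
        funext j
        rw [List.get_eq_getElem, List.getElem_replicate]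
        unfold aa
        push_cast
        ring_nf
      calc ∏ j : Fin N,
            (((2 * (s.orderEmbOfFin hc j.rev) + 1 : ℕ) : ℝ) ^ (List.replicate n 2).get j)⁻¹
          = ∏ j : Fin N, aa (s.orderEmbOfFin hc j.rev) := by rw [hval]
        _ = ∏ j : Fin N, aa (s.orderEmbOfFin hc j) :=
            Equiv.prod_comp Fin.revPerm (fun j => aa (s.orderEmbOfFin hc j))
        _ = ∏ x ∈ s, aa x := by
            apply Finset.prod_bij (fun j _ => s.orderEmbOfFin hc j)
            · intro j _; exact Finset.orderEmbOfFin_mem s hc j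
            · intro j _ j' _ hjj'
              exact (s.orderEmbOfFin hc).injective hjj'
            · intro b hb
              have : b ∈ Set.range (s.orderEmbOfFin hc) := by
                rw [Finset.range_orderEmbOfFin]; exact hb
              obtain ⟨j, hj⟩ := this
              exact ⟨j, Finset.mem_univ j, hj⟩
            · intro j _; rfl
        _ = g s := (if_pos (by rw [← hN]; exact hc)).symm
    · constructor
      · intro j; exact ⟨_, rfl⟩
      · intro j j' hjj'
        have : s.orderEmbOfFin hc j'.rev < s.orderEmbOfFin hc j.rev :=
          (s.orderEmbOfFin hc).strictMono (Fin.rev_lt_rev.2 hjj')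
        omega

end TGenAux
set_option maxHeartbeats 2000000 in
/-- `1 + ∑_{n ≥ 1} t({2}ⁿ) wⁿ = exp(∑_{n ≥ 1} ((-1)^{n-1}/n) t(2n) wⁿ)` for `|w| < 1`. -/
theorem t_two_repeated_generating_function (w : ℝ) (hw : |w| < 1) :
    Summable (fun n : ℕ => multT (List.replicate (n + 1) 2) * w ^ (n + 1)) ∧
    Summable (fun n : ℕ =>
      (-1 : ℝ) ^ n / (n + 1) * tval (2 * (n + 1)) * w ^ (n + 1)) ∧
    1 + ∑' n : ℕ, multT (List.replicate (n + 1) 2) * w ^ (n + 1)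
      = Real.exp (∑' n : ℕ,
          (-1 : ℝ) ^ n / (n + 1) * tval (2 * (n + 1)) * w ^ (n + 1)) := by
  classical
  set fw : ℕ → ℝ := fun i => w * aa i with hfw
  have habsf : (fun i => |fw i|) = fun i => |w| * aa i := by
    funext i; rw [hfw, abs_mul, abs_of_pos (aa_pos i)]
  have habs : Summable (fun i => |fw i|) := by
    rw [habsf]; exact summable_aa.mul_left _
  have habs1 : ∀ i, |fw i| < 1 := by
    intro i
    have h1 : |fw i| = |w| * aa i := congrFun habsf i
    have h2 : |w| * aa i ≤ |w| * 1 := mul_le_mul_of_nonneg_left (aa_le_one i) (abs_nonneg w)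
    rw [h1]; nlinarith [abs_nonneg w]
  have hpos : ∀ i, 0 < 1 + fw i := by
    intro i
    have := abs_lt.1 (habs1 i)
    linarith [this.1]
  set Q : ℝ := ∑' s : Finset ℕ, ∏ i ∈ s, fw i with hQ
  have hprodQ : HasProd (fun i => 1 + fw i) Q := hasProd_one_add habs
  have hsumQ : HasSum (fun s : Finset ℕ => ∏ i ∈ s, fw i) Q := (summable_prodf habs).hasSum
  have hfib : HasSum (fun k : ℕ =>
      ∑' s : (Finset.card ⁻¹' {k} : Set (Finset ℕ)), ∏ i ∈ (s : Finset ℕ), fw i) Q :=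
    hsumQ.tsum_fiberwise Finset.card
  have hEe : ∀ k : ℕ,
      (∑' s : (Finset.card ⁻¹' {k} : Set (Finset ℕ)), ∏ i ∈ (s : Finset ℕ), fw i)
        = multT (List.replicate k 2) * w ^ k := by
    intro k
    have h1 : ∀ s : (Finset.card ⁻¹' {k} : Set (Finset ℕ)),
        ∏ i ∈ (s : Finset ℕ), fw i = w ^ k * ∏ i ∈ (s : Finset ℕ), aa i := by
      rintro ⟨s, hs⟩
      have hsk : s.card = k := hs
      simp only [hfw]
      rw [Finset.prod_mul_distrib, Finset.prod_const, hsk]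
    calc (∑' s : (Finset.card ⁻¹' {k} : Set (Finset ℕ)), ∏ i ∈ (s : Finset ℕ), fw i)
        = ∑' s : (Finset.card ⁻¹' {k} : Set (Finset ℕ)), w ^ k * ∏ i ∈ (s : Finset ℕ), aa i :=
          tsum_congr h1
      _ = w ^ k * ∑' s : (Finset.card ⁻¹' {k} : Set (Finset ℕ)), ∏ i ∈ (s : Finset ℕ), aa i :=
          tsum_mul_left
      _ = w ^ k * ∑' s : Finset ℕ, (if s.card = k then ∏ i ∈ s, aa i else 0) := by
          congr 1
          refine (tsum_subtype (Finset.card ⁻¹' {k} : Set (Finset ℕ))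
            (fun t => ∏ i ∈ t, aa i)).trans ?_
          apply tsum_congr
          intro s
          by_cases h : s.card = k
          · rw [Set.indicator_of_mem (show s ∈ Finset.card ⁻¹' {k} from h), if_pos h]
          · rw [Set.indicator_of_notMem (show s ∉ Finset.card ⁻¹' {k} from h), if_neg h]
      _ = multT (List.replicate k 2) * w ^ k := by
          rw [multT_replicate k, mul_comm]
  have hfib' : HasSum (fun k : ℕ => multT (List.replicate k 2) * w ^ k) Q := by
    rwa [funext hEe] at hfib
  have h0 : multT (List.replicate 0 2) = 1 := by
    rw [multT_replicate]
    rw [tsum_eq_single (∅ : Finset ℕ)]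
    · simp
    · intro s hs
      rw [if_neg (fun h => hs (Finset.card_eq_zero.1 h))]
  have hsummable0 : Summable (fun k : ℕ => multT (List.replicate k 2) * w ^ k) := hfib'.summable
  have hsum1 : Summable (fun k : ℕ => multT (List.replicate (k+1) 2) * w ^ (k+1)) :=
    (summable_nat_add_iff 1).2 hsummable0
  have hQeq : 1 + ∑' k : ℕ, multT (List.replicate (k+1) 2) * w ^ (k+1) = Q := by
    rw [← hfib'.tsum_eq, Summable.tsum_eq_zero_add hsummable0, h0]
    norm_num
  set F : ℕ × ℕ → ℝ := fun p => -((-fw p.1) ^ (p.2+1) / (p.2+1)) with hF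
  have hrow : ∀ i, HasSum (fun k => F (i, k)) (Real.log (1 + fw i)) := by
    intro i
    have h := (Real.hasSum_pow_div_log_of_abs_lt_one (x := -fw i) (by rw [abs_neg]; exact habs1 i)).neg
    simp only [sub_neg_eq_add, neg_neg] at h
    exact h
  have hFsummable : Summable F := by
    have hdom : Summable (fun p : ℕ × ℕ => (|w| * aa p.1) * |w| ^ p.2) :=
      Summable.mul_of_nonneg (summable_aa.mul_left |w|)
        (summable_geometric_of_lt_one (abs_nonneg w) hw)
        (fun i => mul_nonneg (abs_nonneg w) (aa_pos i).le) (fun n => by positivity)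
    apply Summable.of_abs
    refine hdom.of_nonneg_of_le (fun p => abs_nonneg _) (fun p => ?_)
    obtain ⟨i, k⟩ := p
    have hk1 : (0:ℝ) < (k:ℝ) + 1 := by positivity
    have e1 : |F (i, k)| = |fw i| ^ (k+1) / ((k:ℝ)+1) := by
      simp only [hF]
      rw [abs_neg, abs_div, abs_pow, abs_neg, abs_of_pos hk1]
    rw [e1]
    have e2 : |fw i| ^ (k+1) ≤ (|w| * aa i) * |w| ^ k := by
      rw [congrFun habsf i, pow_succ, mul_comm ((|w| * aa i) ^ k) _]
      exact mul_le_mul_of_nonneg_left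
        (pow_le_pow_left₀ (mul_nonneg (abs_nonneg w) (aa_pos i).le)
          (by nlinarith [aa_le_one i, abs_nonneg w, (aa_pos i).le]) k)
        (mul_nonneg (abs_nonneg w) (aa_pos i).le)
    calc |fw i| ^ (k+1) / ((k:ℝ)+1) ≤ |fw i| ^ (k+1) := by
          apply div_le_self (by positivity) (by linarith)
      _ ≤ (|w| * aa i) * |w| ^ k := e2
  have hlogsummable : Summable (fun i => Real.log (1 + fw i)) :=
    hFsummable.prod.congr (fun i => (hrow i).tsum_eq)
  set S := ∑' i, Real.log (1 + fw i) with hS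
  have hexp : HasProd (fun i => 1 + fw i) (Real.exp S) := by
    have h := hlogsummable.hasSum.rexp
    have hfun : (Real.exp ∘ fun i => Real.log (1 + fw i)) = fun i => 1 + fw i := by
      funext i; exact Real.exp_log (hpos i)
    rwa [hfun] at h
  have hQS : Q = Real.exp S := hprodQ.unique hexp
  have htvpow : ∀ k : ℕ, tval (2 * (k+1)) = ∑' i : ℕ, aa i ^ (k+1) := by
    intro k
    unfold tval
    apply tsum_congr
    intro m
    rw [one_div]
    unfold aa
    rw [inv_pow, ← pow_mul]
  have hsaak : ∀ k : ℕ, Summable (fun i : ℕ => aa i ^ (k+1)) := by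
    intro k
    refine summable_aa.of_nonneg_of_le (fun i => pow_nonneg (aa_pos i).le _) (fun i => ?_)
    rw [pow_succ]
    nlinarith [pow_le_one₀ (aa_pos i).le (aa_le_one i) (n := k), (aa_pos i).le,
      pow_nonneg (aa_pos i).le k]
  have hcol : ∀ k : ℕ, HasSum (fun i => F (i, k))
      ((-1:ℝ)^k / ((k:ℝ)+1) * tval (2*(k+1)) * w^(k+1)) := by
    intro k
    have hfa : (fun i => F (i, k))
        = fun i => ((-1:ℝ)^k / ((k:ℝ)+1) * w^(k+1)) * aa i ^ (k+1) := by
      funext i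
      simp only [hF, hfw]
      rw [neg_pow, mul_pow, pow_succ (-1:ℝ) k]
      push_cast
      ring
    have hsum : HasSum (fun i => ((-1:ℝ)^k / ((k:ℝ)+1) * w^(k+1)) * aa i ^ (k+1))
        (((-1:ℝ)^k / ((k:ℝ)+1) * w^(k+1)) * ∑' i, aa i ^ (k+1)) :=
      (hsaak k).hasSum.mul_left _
    rw [← htvpow k] at hsum
    have heq : ((-1:ℝ)^k / ((k:ℝ)+1) * w^(k+1)) * tval (2*(k+1))
        = (-1:ℝ)^k / ((k:ℝ)+1) * tval (2*(k+1)) * w^(k+1) := by ring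
    rw [heq] at hsum
    rw [hfa]
    exact hsum
  have hFsw : Summable (fun k : ℕ => ∑' i : ℕ, F (i, k)) :=
    hFsummable.prod_symm.prod.congr (fun k => rfl)
  have hsum2 : Summable (fun k : ℕ => (-1:ℝ)^k / ((k:ℝ)+1) * tval (2*(k+1)) * w^(k+1)) :=
    hFsw.congr (fun k => (hcol k).tsum_eq)
  have hScl : S = ∑' k : ℕ, (-1:ℝ)^k / ((k:ℝ)+1) * tval (2*(k+1)) * w^(k+1) := by
    rw [hS]
    rw [tsum_congr (fun i => (hrow i).tsum_eq.symm)]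
    rw [(Summable.tsum_comm (f := fun i k => F (i, k)) hFsummable).symm]
    exact tsum_congr (fun k => (hcol k).tsum_eq)
  refine ⟨hsum1, hsum2, ?_⟩
  rw [hQeq, hQS, hScl]
end

section
/- For every complex number z with |z| < 1, Γ((1−z)/2) = √π · 2^z · exp( γz/2 + ∑_{n ≥ 2} (t(n)/n) z^n ), where Γ is the Gamma function, γ is the Euler–Mascheroni constant, and the series converges absolutely. -/
open scoped BigOperators

section AuxGamma
open Filter Topology Finset


noncomputable def zetaR (k : ℕ) : ℝ := ∑' j : ℕ, ((j : ℝ) + 1)⁻¹ ^ k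

lemma summable_zetaR {k : ℕ} (hk : 2 ≤ k) :
    Summable (fun j : ℕ => ((j : ℝ) + 1)⁻¹ ^ k) := by
  have h := (Real.summable_nat_pow_inv (p := k)).mpr hk
  have h2 := (summable_nat_add_iff (f := fun n : ℕ => ((n : ℝ) ^ k)⁻¹) 1).mpr h
  refine h2.congr fun j => ?_
  push_cast
  rw [inv_pow]

lemma psum_zeta_le {k : ℕ} (hk : 2 ≤ k) (n : ℕ) :
    ∑ j ∈ range n, ((j : ℝ) + 1)⁻¹ ^ k ≤ 2 := by
  have h1 : ∑ j ∈ range n, ((j : ℝ) + 1)⁻¹ ^ k ≤ ∑ j ∈ range n, ((j : ℝ) + 1)⁻¹ ^ 2 := by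
    refine Finset.sum_le_sum fun j _ => ?_
    refine pow_le_pow_of_le_one (by positivity) ?_ hk
    rw [inv_le_one_iff₀]; right; linarith [Nat.cast_nonneg (α := ℝ) j]
  have h2 : ∑ j ∈ range n, ((j : ℝ) + 1)⁻¹ ^ 2 ≤ zetaR 2 :=
    Summable.sum_le_tsum _ (fun j _ => by positivity) (summable_zetaR le_rfl)
  have h3 : zetaR 2 = Real.pi ^ 2 / 6 := by
    have h := hasSum_zeta_two
    have h' : HasSum (fun n : ℕ => (1:ℝ) / (n:ℝ)^2) (Real.pi ^ 2 / 6 - ∑ i ∈ range 1, (1:ℝ)/(i:ℝ)^2 + ∑ i ∈ range 1, (1:ℝ)/(i:ℝ)^2) := by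
      simpa using h
    have h4 := (hasSum_nat_add_iff (f := fun n : ℕ => (1 : ℝ) / (n : ℝ) ^ 2) 1).mpr h' 
    rw [zetaR]
    have heq : ∀ j : ℕ, ((j : ℝ) + 1)⁻¹ ^ 2 = (1 : ℝ) / ((j + 1 : ℕ) : ℝ) ^ 2 := by
      intro j; push_cast; rw [one_div, inv_pow]
    have h5 : HasSum (fun j : ℕ => ((j:ℝ)+1)⁻¹ ^ 2) (Real.pi ^ 2 / 6 - ∑ i ∈ range 1, (1:ℝ)/(i:ℝ)^2) := h4.congr_fun heq
    rw [h5.tsum_eq]; simp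
  have h5 : Real.pi ^ 2 / 6 ≤ 2 := by nlinarith [Real.pi_lt_d2, Real.pi_pos]
  linarith

lemma zetaR_nonneg (k : ℕ) : 0 ≤ zetaR k := tsum_nonneg fun j => by positivity

lemma zetaR_le_two {k : ℕ} (hk : 2 ≤ k) : zetaR k ≤ 2 :=
  Summable.tsum_le_of_sum_range_le (summable_zetaR hk) (psum_zeta_le hk)


lemma tval_eq_zetaR {k : ℕ} (hk : 2 ≤ k) : tval k = (1 - (2 : ℝ)⁻¹ ^ k) * zetaR k := by
  set f : ℕ → ℝ := fun n => ((n : ℝ)⁻¹) ^ k with hf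
  have hf0 : f 0 = 0 := by simp [hf, zero_pow (by omega : k ≠ 0)]
  have hfs : ∀ j : ℕ, f (j + 1) = ((j : ℝ) + 1)⁻¹ ^ k := by intro j; simp only [hf]; push_cast; ring_nf
  have hsum : Summable f := by
    rw [← summable_nat_add_iff 1]
    exact (summable_zetaR hk).congr fun j => (hfs j).symm
  have htot : ∑' n, f n = zetaR k := by
    rw [Summable.tsum_eq_zero_add hsum, hf0, zero_add, zetaR]
    exact tsum_congr hfs
  have he : Summable fun j => f (2 * j) :=
    hsum.comp_injective fun a b h => by omega
  have ho : Summable fun j => f (2 * j + 1) :=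
    hsum.comp_injective fun a b h => by omega
  have heq := tsum_even_add_odd he ho
  have h1 : ∀ j : ℕ, f (2 * j) = (2 : ℝ)⁻¹ ^ k * f j := by
    intro j; simp only [hf]; push_cast; rw [mul_inv, mul_pow]
  have h2 : ∀ j : ℕ, f (2 * j + 1) = 1 / (2 * (j : ℝ) + 1) ^ k := by
    intro j; simp only [hf]; push_cast; rw [one_div, inv_pow]
  rw [tsum_congr h1, tsum_congr h2, tsum_mul_left, htot] at heq
  have : tval k = ∑' j : ℕ, 1 / (2 * (j : ℝ) + 1) ^ k := rfl
  rw [this]; linarith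


noncomputable def Tc (w : ℂ) : ℂ := ∑' m : ℕ, (zetaR (m + 2) : ℂ) * w ^ (m + 2) / (m + 2)

lemma norm_nat_add_two (m : ℕ) : ‖((m : ℂ) + 2)‖ = (m : ℝ) + 2 := by
  have : ((m : ℂ) + 2) = ((m + 2 : ℕ) : ℂ) := by push_cast; ring
  rw [this, Complex.norm_natCast]; push_cast; ring

lemma term_norm_le {w : ℂ} (c : ℂ) (hc : ‖c‖ ≤ 2) (m : ℕ) :
    ‖c * w ^ (m + 2) / ((m : ℂ) + 2)‖ ≤ 2 * ‖w‖ ^ 2 * ‖w‖ ^ m := by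
  rw [norm_div, norm_mul, norm_pow, norm_nat_add_two]
  have h1 : ‖c‖ * ‖w‖ ^ (m + 2) / ((m : ℝ) + 2) ≤ ‖c‖ * ‖w‖ ^ (m + 2) := by
    apply div_le_self (by positivity); linarith [Nat.cast_nonneg (α := ℝ) m]
  have h2 : ‖c‖ * ‖w‖ ^ (m + 2) ≤ 2 * ‖w‖ ^ (m + 2) := by
    gcongr
  calc ‖c‖ * ‖w‖ ^ (m + 2) / ((m : ℝ) + 2) ≤ 2 * ‖w‖ ^ (m + 2) := h1.trans h2
    _ = 2 * ‖w‖ ^ 2 * ‖w‖ ^ m := by rw [pow_add]; ring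

lemma summable_bound {w : ℂ} (hw : ‖w‖ < 1) :
    Summable (fun m : ℕ => 2 * ‖w‖ ^ 2 * ‖w‖ ^ m) :=
  (summable_geometric_of_lt_one (norm_nonneg w) hw).mul_left _

lemma zetaC_norm_le {k : ℕ} (hk : 2 ≤ k) : ‖((zetaR k : ℝ) : ℂ)‖ ≤ 2 := by
  rw [Complex.norm_real, Real.norm_eq_abs, abs_of_nonneg (zetaR_nonneg k)]
  exact zetaR_le_two hk

lemma summable_Tc {w : ℂ} (hw : ‖w‖ < 1) :
    Summable (fun m : ℕ => (zetaR (m + 2) : ℂ) * w ^ (m + 2) / ((m : ℂ) + 2)) :=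
  Summable.of_norm_bounded (summable_bound hw)
    (fun m => term_norm_le _ (zetaC_norm_le (by omega)) m)

lemma hasSum_zetaC (k : ℕ) (hk : 2 ≤ k) :
    HasSum (fun j : ℕ => ((j : ℂ) + 1)⁻¹ ^ k) ((zetaR k : ℝ) : ℂ) := by
  have h := (summable_zetaR hk).hasSum
  have h2 := Complex.ofRealCLM.hasSum h
  refine h2.congr_fun fun j => ?_
  simp only [Complex.ofRealCLM_apply]
  push_cast
  ring


open Filter Topology Finset in
lemma GammaSeq_eq {w : ℂ} (hw : ‖w‖ < 1) {n : ℕ} (hn : 1 ≤ n) :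
    Complex.GammaSeq (1 - w) n =
      ((n : ℂ) / ((n : ℂ) + 1)) *
        Complex.exp (w * (((harmonic (n + 1) : ℝ) - Real.log n : ℝ) : ℂ) +
          ∑' m : ℕ, (∑ j ∈ range (n + 1), ((j : ℂ) + 1)⁻¹ ^ (m + 2)) * w ^ (m + 2) / ((m : ℂ) + 2)) := by
  have hwj : ∀ j : ℕ, ‖w / ((j : ℂ) + 1)‖ < 1 := by
    intro j
    rw [norm_div]
    have h2 : (1 : ℝ) ≤ ‖(j : ℂ) + 1‖ := by
      have h3 : ((j : ℂ) + 1) = ((j + 1 : ℕ) : ℂ) := by push_cast; ring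
      rw [h3, Complex.norm_natCast]
      exact_mod_cast Nat.succ_le_succ (Nat.zero_le j)
    calc ‖w‖ / ‖(j : ℂ) + 1‖ ≤ ‖w‖ / 1 := by gcongr
      _ = ‖w‖ := div_one _
      _ < 1 := hw
  have hjne : ∀ j : ℕ, ((j : ℂ) + 1) ≠ 0 := by
    intro j h
    have : ((j : ℂ) + 1) = ((j + 1 : ℕ) : ℂ) := by push_cast; ring
    rw [this] at h
    exact (Nat.cast_ne_zero.mpr (Nat.succ_ne_zero j)) h
  have hne : ∀ j : ℕ, (1 : ℂ) - w / ((j : ℂ) + 1) ≠ 0 := by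
    intro j h
    have h1 : w / ((j : ℂ) + 1) = 1 := by linear_combination -h
    have h2 := hwj j
    rw [h1] at h2
    simp at h2
  have hS2 : ∀ j : ℕ, HasSum (fun m : ℕ => (w / ((j : ℂ) + 1)) ^ (m + 2) / ((m : ℂ) + 2))
      (-Complex.log (1 - w / ((j : ℂ) + 1)) - w / ((j : ℂ) + 1)) := by
    intro j
    set x := w / ((j : ℂ) + 1) with hx
    have h := Complex.hasSum_taylorSeries_neg_log (hwj j)
    have h0 : (∑ i ∈ range 2, x ^ i / (i : ℂ)) = x := by
      simp [Finset.sum_range_succ]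
    have h' : HasSum (fun m : ℕ => x ^ m / (m : ℂ))
        ((-Complex.log (1 - x) - x) + ∑ i ∈ range 2, x ^ i / (i : ℂ)) := by
      rw [h0]; simpa using h
    have h2 := (hasSum_nat_add_iff (f := fun m : ℕ => x ^ m / (m : ℂ)) 2).mpr h'
    refine h2.congr_fun fun m => ?_
    push_cast
    ring_nf
  set S2 : ℕ → ℂ := fun j => ∑' m : ℕ, (w / ((j : ℂ) + 1)) ^ (m + 2) / ((m : ℂ) + 2) with hS2def
  have hlogeq : ∀ j : ℕ, -Complex.log (1 - w / ((j : ℂ) + 1)) = w / ((j : ℂ) + 1) + S2 j := by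
    intro j
    have h := (hS2 j).tsum_eq
    have h2 : S2 j = -Complex.log (1 - w / ((j : ℂ) + 1)) - w / ((j : ℂ) + 1) := h
    rw [h2]
    ring
  have hn0 : (n : ℂ) ≠ 0 := Nat.cast_ne_zero.mpr (by omega)
  set L : ℝ := Real.log n with hL
  -- product identity
  have hprod : (∏ j ∈ Finset.range (n + 1), (1 - w + (j : ℂ))) =
      ((Nat.factorial (n+1) : ℕ) : ℂ) * ∏ j ∈ range (n + 1), (1 - w / ((j : ℂ) + 1)) := by
    have e1 : ∀ j ∈ range (n + 1), (1 - w + (j : ℂ)) = ((j : ℂ) + 1) * (1 - w / ((j : ℂ) + 1)) := by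
      intro j _
      have hj := hjne j
      field_simp
      ring
    rw [Finset.prod_congr rfl e1, Finset.prod_mul_distrib]
    congr 1
    calc ∏ j ∈ range (n + 1), ((j : ℂ) + 1)
        = ((∏ j ∈ range (n + 1), (j + 1) : ℕ) : ℂ) := by push_cast; rfl
      _ = ((Nat.factorial (n+1) : ℕ) : ℂ) := by rw [Finset.prod_range_add_one_eq_factorial (n+1)]
  have hprod2 : (∏ j ∈ range (n + 1), ((1 : ℂ) - w / ((j : ℂ) + 1))) =
      Complex.exp (∑ j ∈ range (n + 1), Complex.log (1 - w / ((j : ℂ) + 1))) := by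
    rw [Complex.exp_sum]
    exact Finset.prod_congr rfl fun j _ => (Complex.exp_log (hne j)).symm
  -- cpow identity
  have hcpow : (n : ℂ) ^ (1 - w) = (n : ℂ) * Complex.exp (-(w * (L : ℂ))) := by
    rw [Complex.cpow_def_of_ne_zero hn0]
    have hlog : Complex.log (n : ℂ) = ((L : ℝ) : ℂ) := by
      rw [hL, Complex.natCast_log]
    rw [hlog]
    have : ((L : ℝ) : ℂ) * (1 - w) = ((L : ℝ) : ℂ) + -(w * (L : ℂ)) := by ring
    rw [this, Complex.exp_add]
    congr 1
    rw [← Complex.ofReal_exp, hL, Real.exp_log (by exact_mod_cast Nat.pos_of_ne_zero (by omega))]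
    simp
  -- exponent identity
  set T : ℂ := ∑' m : ℕ,
    (∑ j ∈ range (n + 1), ((j : ℂ) + 1)⁻¹ ^ (m + 2)) * w ^ (m + 2) / ((m : ℂ) + 2) with hTdef
  have hharm : (((harmonic (n + 1) : ℝ)) : ℂ) = ∑ j ∈ range (n + 1), ((j : ℂ) + 1)⁻¹ := by
    rw [harmonic]
    push_cast
    rfl
  have hswap : (∑ j ∈ range (n + 1), S2 j) = T := by
    rw [hS2def, hTdef, ← Summable.tsum_finsetSum (fun j _ => (hS2 j).summable)]
    refine tsum_congr fun m => ?_
    have e : ∀ j ∈ range (n + 1), (w / ((j : ℂ) + 1)) ^ (m + 2) / ((m : ℂ) + 2)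
        = ((j : ℂ) + 1)⁻¹ ^ (m + 2) * w ^ (m + 2) / ((m : ℂ) + 2) := by
      intro j _
      rw [div_eq_mul_inv w, mul_pow]
      ring
    rw [Finset.sum_congr rfl e, ← Finset.sum_div, ← Finset.sum_mul]
  have hexp : -(w * (L : ℂ)) - (∑ j ∈ range (n + 1), Complex.log (1 - w / ((j : ℂ) + 1)))
      = w * (((harmonic (n + 1) : ℝ) - L : ℝ) : ℂ) + T := by
    have h1 : -(∑ j ∈ range (n + 1), Complex.log (1 - w / ((j : ℂ) + 1)))
        = ∑ j ∈ range (n + 1), (w / ((j : ℂ) + 1) + S2 j) := by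
      rw [← Finset.sum_neg_distrib]
      exact Finset.sum_congr rfl fun j _ => hlogeq j
    have h2 : (∑ j ∈ range (n + 1), (w / ((j : ℂ) + 1) + S2 j))
        = w * (((harmonic (n + 1) : ℝ)) : ℂ) + T := by
      rw [Finset.sum_add_distrib, hswap, hharm, Finset.mul_sum]
      simp only [div_eq_mul_inv]
    have h3 : -(w * (L : ℂ)) - (∑ j ∈ range (n + 1), Complex.log (1 - w / ((j : ℂ) + 1)))
        = -(w * (L : ℂ)) + (w * (((harmonic (n + 1) : ℝ)) : ℂ) + T) := by
      rw [sub_eq_add_neg, h1, h2]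
    rw [h3]
    have h4 : (((harmonic (n + 1) : ℝ) - L : ℝ) : ℂ)
        = (((harmonic (n + 1) : ℝ)) : ℂ) - ((L : ℝ) : ℂ) := by push_cast; ring
    rw [h4]
    try ring
  -- final assembly
  rw [Complex.GammaSeq, hprod, hprod2, hcpow, ← hexp, Complex.exp_sub]
  have hfact : ((Nat.factorial (n+1) : ℕ) : ℂ) = ((n : ℂ) + 1) * ((Nat.factorial n : ℕ) : ℂ) := by
    rw [Nat.factorial_succ]
    push_cast
    ring
  rw [hfact]
  have hne1 : ((n : ℂ) + 1) ≠ 0 := hjne n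
  have hne2 : ((Nat.factorial n : ℕ) : ℂ) ≠ 0 := Nat.cast_ne_zero.mpr (Nat.factorial_ne_zero n)
  have hne3 : Complex.exp (∑ j ∈ range (n + 1), Complex.log (1 - w / ((j : ℂ) + 1))) ≠ 0 :=
    Complex.exp_ne_zero _
  field_simp

open Filter Topology Finset in
lemma Gamma_one_sub_eq {w : ℂ} (hw : ‖w‖ < 1) :
    Complex.Gamma (1 - w) =
      Complex.exp (w * (Real.eulerMascheroniConstant : ℂ) + Tc w) := by
  set γ : ℝ := Real.eulerMascheroniConstant with hγ
  have hwj : ∀ j : ℕ, ‖w / ((j : ℂ) + 1)‖ < 1 := by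
    intro j
    rw [norm_div]
    have h2 : (1 : ℝ) ≤ ‖(j : ℂ) + 1‖ := by
      have h3 : ((j : ℂ) + 1) = ((j + 1 : ℕ) : ℂ) := by push_cast; ring
      rw [h3, Complex.norm_natCast]
      exact_mod_cast Nat.succ_le_succ (Nat.zero_le j)
    calc ‖w‖ / ‖(j : ℂ) + 1‖ ≤ ‖w‖ / 1 := by gcongr
      _ = ‖w‖ := div_one _
      _ < 1 := hw
  have hne : ∀ j : ℕ, (1 : ℂ) - w / ((j : ℂ) + 1) ≠ 0 := by
    intro j h
    have h1 : w / ((j : ℂ) + 1) = 1 := by linear_combination -h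
    have h2 := hwj j
    rw [h1] at h2
    simp at h2
  -- the tail series for -log(1-x)
  have hS2 : ∀ j : ℕ, HasSum (fun m : ℕ => (w / ((j : ℂ) + 1)) ^ (m + 2) / ((m : ℂ) + 2))
      (-Complex.log (1 - w / ((j : ℂ) + 1)) - w / ((j : ℂ) + 1)) := by
    intro j
    set x := w / ((j : ℂ) + 1) with hx
    have h := Complex.hasSum_taylorSeries_neg_log (hwj j)
    have h0 : (∑ i ∈ range 2, x ^ i / (i : ℂ)) = x := by
      simp [Finset.sum_range_succ]
    have h' : HasSum (fun m : ℕ => x ^ m / (m : ℂ))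
        ((-Complex.log (1 - x) - x) + ∑ i ∈ range 2, x ^ i / (i : ℂ)) := by
      rw [h0]; simpa using h
    have h2 := (hasSum_nat_add_iff (f := fun m : ℕ => x ^ m / (m : ℂ)) 2).mpr h'
    refine h2.congr_fun fun m => ?_
    push_cast
    ring_nf
  -- partial zeta sums
  have hTn : ∀ m : ℕ, Tendsto (fun n : ℕ => ∑ j ∈ range (n + 1), ((j : ℂ) + 1)⁻¹ ^ (m + 2))
      atTop (𝓝 ((zetaR (m + 2) : ℝ) : ℂ)) := by
    intro m
    have h := (hasSum_zetaC (m + 2) (by omega)).tendsto_sum_nat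
    exact h.comp (tendsto_add_atTop_nat 1)
  -- the partial T
  set T : ℕ → ℂ := fun n => ∑' m : ℕ,
    (∑ j ∈ range (n + 1), ((j : ℂ) + 1)⁻¹ ^ (m + 2)) * w ^ (m + 2) / ((m : ℂ) + 2) with hT
  have hpsum_norm : ∀ n m : ℕ, ‖∑ j ∈ range (n + 1), ((j : ℂ) + 1)⁻¹ ^ (m + 2)‖ ≤ 2 := by
    intro n m
    calc ‖∑ j ∈ range (n + 1), ((j : ℂ) + 1)⁻¹ ^ (m + 2)‖
        ≤ ∑ j ∈ range (n + 1), ‖((j : ℂ) + 1)⁻¹ ^ (m + 2)‖ := norm_sum_le _ _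
      _ = ∑ j ∈ range (n + 1), ((j : ℝ) + 1)⁻¹ ^ (m + 2) := by
          refine Finset.sum_congr rfl fun j _ => ?_
          rw [norm_pow, norm_inv]
          congr 2
          have h3 : ((j : ℂ) + 1) = ((j + 1 : ℕ) : ℂ) := by push_cast; ring
          rw [h3, Complex.norm_natCast]; push_cast; ring
      _ ≤ 2 := psum_zeta_le (by omega) (n + 1)
  have hTtend : Tendsto T atTop (𝓝 (Tc w)) := by
    rw [hT, Tc]
    refine tendsto_tsum_of_dominated_convergence (summable_bound hw) ?_ ?_
    · intro m
      have := ((hTn m).mul_const (w ^ (m + 2) / ((m : ℂ) + 2)))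
      simpa only [mul_div_assoc] using this
    · filter_upwards with n m
      exact term_norm_le _ (hpsum_norm n m) m
  -- the harmonic part
  have hA : Tendsto (fun n : ℕ => ((harmonic (n + 1) : ℝ) - Real.log n : ℝ)) atTop (𝓝 γ) := by
    have t1 : Tendsto (fun n : ℕ => ((harmonic (n + 1) : ℝ) - Real.log (n + 1) : ℝ)) atTop (𝓝 γ) := by
      have := Real.tendsto_harmonic_sub_log.comp (tendsto_add_atTop_nat 1)
      refine this.congr fun n => ?_
      simp only [Function.comp]
      push_cast
      ring_nf
    have t2 : Tendsto (fun n : ℕ => Real.log ((n : ℝ) + 1) - Real.log n) atTop (𝓝 0) := by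
      have h1 : Tendsto (fun n : ℕ => 1 + 1 / (n : ℝ)) atTop (𝓝 1) := by
        have := tendsto_one_div_atTop_nhds_zero_nat (𝕜 := ℝ)
        simpa using this.const_add 1
      have h2 : Tendsto Real.log (𝓝 (1 : ℝ)) (𝓝 0) := by
        have := (Real.continuousAt_log one_ne_zero).tendsto
        simpa using this
      have h3 := h2.comp h1
      apply h3.congr'
      filter_upwards [eventually_ge_atTop 1] with n hn
      have hn' : (0 : ℝ) < n := by exact_mod_cast hn
      simp only [Function.comp]
      rw [← Real.log_div (by positivity) (by positivity)]
      congr 1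
      field_simp
    have := t1.add t2
    simp only [add_zero] at this
    refine this.congr fun n => ?_
    ring
  -- the full sequence limit
  have hF : Tendsto (fun n : ℕ => ((n : ℂ) / ((n : ℂ) + 1)) *
      Complex.exp (w * ((harmonic (n + 1) : ℝ) - Real.log n : ℝ) + T n)) atTop
      (𝓝 (Complex.exp (w * (γ : ℂ) + Tc w))) := by
    have l1 : Tendsto (fun n : ℕ => (n : ℂ) / ((n : ℂ) + 1)) atTop (𝓝 1) :=
      tendsto_natCast_div_add_atTop (1 : ℂ)
    have l2 : Tendsto (fun n : ℕ => (((harmonic (n + 1) : ℝ) - Real.log n : ℝ) : ℂ)) atTop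
        (𝓝 (γ : ℂ)) := (Complex.continuous_ofReal.tendsto γ).comp hA
    have l3 := ((l2.const_mul w).add hTtend).cexp
    have := l1.mul l3
    simpa using this
  refine tendsto_nhds_unique (Complex.GammaSeq_tendsto_Gamma (1 - w)) (hF.congr' ?_)
  filter_upwards [eventually_ge_atTop 1] with n hn
  exact (GammaSeq_eq hw hn).symm


end AuxGamma

/-- Expansion of the Gamma function in terms of single `t`-values:
`Γ((1-z)/2) = √π ⬝ 2^z ⬝ exp(γz/2 + ∑_{n≥2} (t(n)/n) zⁿ)` for `|z| < 1`. -/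
theorem Gamma_eq_sqrt_pi_two_cpow_exp_tval (z : ℂ) (hz : ‖z‖ < 1) :
    Summable (fun n : ℕ => ((tval (n + 2) : ℂ) / (n + 2)) * z ^ (n + 2)) ∧
    Complex.Gamma ((1 - z) / 2)
      = (Real.sqrt Real.pi : ℂ) * (2 : ℂ) ^ z *
          Complex.exp ((Real.eulerMascheroniConstant : ℂ) * z / 2 +
            ∑' n : ℕ, ((tval (n + 2) : ℂ) / (n + 2)) * z ^ (n + 2)) := by
  have hz' : ‖z‖ < 1 := hz
  have hz2 : ‖z / 2‖ < 1 := by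
    rw [norm_div]
    simp only [Complex.norm_ofNat]
    linarith
  have hterm : ∀ m : ℕ,
      (zetaR (m + 2) : ℂ) * z ^ (m + 2) / ((m : ℂ) + 2)
        - (zetaR (m + 2) : ℂ) * (z / 2) ^ (m + 2) / ((m : ℂ) + 2)
      = ((tval (m + 2) : ℂ) / ((m : ℂ) + 2)) * z ^ (m + 2) := by
    intro m
    have htv : ((tval (m + 2) : ℝ) : ℂ) = (1 - (2 : ℂ)⁻¹ ^ (m + 2)) * ((zetaR (m + 2) : ℝ) : ℂ) := by
      have h := tval_eq_zetaR (k := m + 2) (by omega)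
      rw [h]
      push_cast
      ring
    have hm2 : ((m : ℂ) + 2) ≠ 0 := by
      have he : ((m : ℂ) + 2) = ((m + 2 : ℕ) : ℂ) := by push_cast; ring
      rw [he]
      exact Nat.cast_ne_zero.mpr (by omega)
    rw [htv]
    have h2 : ((2 : ℂ)) ≠ 0 := two_ne_zero
    field_simp
    ring
  have hs1 := summable_Tc hz'
  have hs2 := summable_Tc hz2
  have hsummable : Summable (fun n : ℕ => ((tval (n + 2) : ℂ) / ((n : ℂ) + 2)) * z ^ (n + 2)) :=
    (hs1.sub hs2).congr hterm
  refine ⟨hsummable, ?_⟩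
  have hdup := Complex.Gamma_mul_Gamma_add_half ((1 - z) / 2)
  have e1 : (1 - z) / 2 + 1 / 2 = 1 - z / 2 := by ring
  have e2 : 2 * ((1 - z) / 2) = 1 - z := by ring
  have e3 : 1 - 2 * ((1 - z) / 2) = z := by ring
  rw [e1, e3, e2] at hdup
  have hG1 := Gamma_one_sub_eq hz'
  have hG2 := Gamma_one_sub_eq hz2
  have hne : Complex.Gamma (1 - z / 2) ≠ 0 := by rw [hG2]; exact Complex.exp_ne_zero _
  have key : Complex.Gamma ((1 - z) / 2)
      = Complex.Gamma (1 - z) * (2 : ℂ) ^ z * (Real.sqrt Real.pi : ℂ) / Complex.Gamma (1 - z / 2) := by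
    rw [eq_div_iff hne]
    linear_combination hdup
  have hTsub : Tc z - Tc (z / 2) = ∑' n : ℕ, ((tval (n + 2) : ℂ) / ((n : ℂ) + 2)) * z ^ (n + 2) := by
    rw [Tc, Tc, ← Summable.tsum_sub hs1 hs2]
    exact tsum_congr hterm
  rw [key, hG1, hG2]
  have hstep : Complex.exp (z * (Real.eulerMascheroniConstant : ℂ) + Tc z) * (2 : ℂ) ^ z *
        (Real.sqrt Real.pi : ℂ) / Complex.exp (z / 2 * (Real.eulerMascheroniConstant : ℂ) + Tc (z / 2))
      = (Real.sqrt Real.pi : ℂ) * (2 : ℂ) ^ z *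
        Complex.exp ((z * (Real.eulerMascheroniConstant : ℂ) + Tc z)
          - (z / 2 * (Real.eulerMascheroniConstant : ℂ) + Tc (z / 2))) := by
    rw [Complex.exp_sub]
    ring
  rw [hstep]
  congr 1
  rw [← hTsub]
  ring
end
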